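/- arXiv:0911.4196 — 9 statements merged into one kernel-verified Lean document; each statement's English description precedes it below -/
import Mathlib

section
/- Let (R, R ∩ 𝔪) be a pca subring of T and let c ∈ pT ∩ R. Then there exists a pca subring S of T such that R ⊆ S ⊆ T, c ∈ pS, and Γ(S) = Γ(R). -/
universe u

/-- `Γ(X) = max(|X|, ℵ₀)`. -/
noncomputable def Gamma (X : Type u) : Cardinal.{u} :=
  max (Cardinal.mk X) Cardinal.aleph0

/-- The set `(Q \ pT)R = {t ∈ T | t = qr for some q ∈ Q \ pT, r ∈ R}`. -/
def CompAvoid {T : Type u} [CommRing T] (Q : Ideal T) (p : T) (R : Set T) : Set T :=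
  {t : T | ∃ q ∈ Q, q ∉ Ideal.span {p} ∧ ∃ r ∈ R, t = q * r}

/-- `R` is quasilocal with maximal ideal `R ∩ 𝔪`: every element of `R` outside the
maximal ideal of `T` is a unit of `R`. -/
def QuasilocalWithMaxIdeal {T : Type u} [CommRing T] [IsLocalRing T] (R : Subring T) : Prop :=
  ∀ x : R, (x : T) ∉ IsLocalRing.maximalIdeal T → IsUnit x

/-- `R` is a `p`ca (`pT`-complement avoiding) subring of `T`:
`(R, R ∩ 𝔪)` is quasilocal, `p ∈ R`, `Γ(R) < |T|`, `R ∩ P = (0)` for every associated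
prime `P` of `T`, and `((Qᵢ \ pT)R) ∩ R = {0}` for all `i`. -/
def IsPcaSubring {T : Type u} [CommRing T] [IsLocalRing T] {k : ℕ}
    (Q : Fin k → Ideal T) (p : T) (R : Subring T) : Prop :=
  p ∈ R ∧ QuasilocalWithMaxIdeal R ∧
  Gamma ↥R < Cardinal.mk T ∧
  (∀ P ∈ associatedPrimes T T, ∀ x ∈ R, x ∈ P → x = 0) ∧
  (∀ i : Fin k, ∀ t ∈ CompAvoid (Q i) p (R : Set T), t ∈ R → t = 0)

/-- **Lemma 3 (Claim 1).** If `R` is a `p`ca subring of `T` and `c ∈ pT ∩ R`, then there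
is a `p`ca subring `S` with `R ⊆ S ⊆ T`, `c ∈ pS` and `Γ(S) = Γ(R)`. -/
theorem statement0 {T : Type u} [CommRing T] [IsLocalRing T] [IsNoetherianRing T]
    [IsAdicComplete (IsLocalRing.maximalIdeal T) T]
    {k : ℕ} (hk : 0 < k) (Q : Fin k → Ideal T)
    (hQprime : ∀ i, (Q i).IsPrime)
    (hQnonmax : ∀ i, Q i ≠ IsLocalRing.maximalIdeal T)
    (hQinc : ∀ i j, Q i ≤ Q j → Q i = Q j)
    (p : T) (hp0 : p ≠ 0) (hpreg : p ∈ nonZeroDivisors T) (hpQ : ∀ i, p ∈ Q i)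
    (R : Subring T) (hR : IsPcaSubring Q p R)
    (c : T) (hcR : c ∈ R) (hcpT : c ∈ Ideal.span {p}) :
    ∃ S : Subring T, IsPcaSubring Q p S ∧ R ≤ S ∧ (∃ s ∈ S, c = p * s) ∧
      Gamma ↥S = Gamma ↥R := by
  obtain ⟨hpR, hQL, hΓ, hP, hCA⟩ := hR
  obtain ⟨t, ht⟩ : ∃ t, c = p * t := (Ideal.mem_span_singleton.mp hcpT).imp (fun _ h => h)
  -- units not in the maximal ideal
  have hunit : ∀ b : T, b ∉ IsLocalRing.maximalIdeal T → IsUnit b := fun b hb => by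
    simpa [IsLocalRing.mem_maximalIdeal, mem_nonunits_iff] using hb
  have hunit' : ∀ b : T, IsUnit b → b ∉ IsLocalRing.maximalIdeal T := fun b hb h => by
    rw [IsLocalRing.mem_maximalIdeal, mem_nonunits_iff] at h; exact h hb
  -- A = R[t]
  set A : Subalgebra ↥R T := Algebra.adjoin ↥R {t} with hA
  have hRA : ∀ x ∈ R, x ∈ A := fun x hx => A.algebraMap_mem ⟨x, hx⟩
  have htA : t ∈ A := Algebra.subset_adjoin rfl
  -- key: p-power multiples of A land in R
  have K1 : ∀ a ∈ A, ∃ n : ℕ, p ^ n * a ∈ R := by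
    intro a ha
    induction ha using Algebra.adjoin_induction with
    | mem x hx =>
      rcases hx with rfl
      exact ⟨1, by rw [pow_one, ← ht]; exact hcR⟩
    | algebraMap r => exact ⟨0, by rw [pow_zero, one_mul]; exact r.2⟩
    | add x y hx hy ihx ihy =>
      obtain ⟨n, hn⟩ := ihx; obtain ⟨m, hm⟩ := ihy
      refine ⟨n + m, ?_⟩
      have : p ^ (n + m) * (x + y) = p ^ m * (p ^ n * x) + p ^ n * (p ^ m * y) := by ring
      rw [this]
      exact add_mem (mul_mem (pow_mem hpR m) hn) (mul_mem (pow_mem hpR n) hm)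
    | mul x y hx hy ihx ihy =>
      obtain ⟨n, hn⟩ := ihx; obtain ⟨m, hm⟩ := ihy
      refine ⟨n + m, ?_⟩
      have : p ^ (n + m) * (x * y) = (p ^ n * x) * (p ^ m * y) := by ring
      rw [this]
      exact mul_mem hn hm
  have hpow : ∀ n : ℕ, p ^ n ∈ nonZeroDivisors T := fun n => pow_mem hpreg n
  -- S = localization of A at A ∩ 𝔪, inside T
  set Scar : Set T := {x : T | ∃ a ∈ A, ∃ b ∈ A, b ∉ IsLocalRing.maximalIdeal T ∧ x * b = a}
    with hScar
  have hone : (1 : T) ∉ IsLocalRing.maximalIdeal T := hunit' 1 isUnit_one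
  have hmulnot : ∀ b₁ b₂ : T, b₁ ∉ IsLocalRing.maximalIdeal T → b₂ ∉ IsLocalRing.maximalIdeal T →
      b₁ * b₂ ∉ IsLocalRing.maximalIdeal T := fun b₁ b₂ h1 h2 =>
    hunit' _ ((hunit _ h1).mul (hunit _ h2))
  set S : Subring T :=
    { carrier := Scar
      zero_mem' := ⟨0, zero_mem A, 1, one_mem A, hone, by ring⟩
      one_mem' := ⟨1, one_mem A, 1, one_mem A, hone, by ring⟩
      add_mem' := by
        rintro x y ⟨a₁, ha₁, b₁, hb₁, hb₁m, hx⟩ ⟨a₂, ha₂, b₂, hb₂, hb₂m, hy⟩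
        refine ⟨a₁ * b₂ + a₂ * b₁, add_mem (mul_mem ha₁ hb₂) (mul_mem ha₂ hb₁),
          b₁ * b₂, mul_mem hb₁ hb₂, hmulnot _ _ hb₁m hb₂m, ?_⟩
        calc (x + y) * (b₁ * b₂) = (x * b₁) * b₂ + (y * b₂) * b₁ := by ring
        _ = a₁ * b₂ + a₂ * b₁ := by rw [hx, hy]
      mul_mem' := by
        rintro x y ⟨a₁, ha₁, b₁, hb₁, hb₁m, hx⟩ ⟨a₂, ha₂, b₂, hb₂, hb₂m, hy⟩
        refine ⟨a₁ * a₂, mul_mem ha₁ ha₂, b₁ * b₂, mul_mem hb₁ hb₂,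
          hmulnot _ _ hb₁m hb₂m, ?_⟩
        calc (x * y) * (b₁ * b₂) = (x * b₁) * (y * b₂) := by ring
        _ = a₁ * a₂ := by rw [hx, hy]
      neg_mem' := by
        rintro x ⟨a, ha, b, hb, hbm, hx⟩
        exact ⟨-a, neg_mem ha, b, hb, hbm, by rw [neg_mul, hx]⟩ } with hS
  have hAS : ∀ x ∈ A, x ∈ S := fun x hx => ⟨x, hx, 1, one_mem A, hone, mul_one x⟩
  have hRS : R ≤ S := fun x hx => hAS x (hRA x hx)
  have hSmem : ∀ x : T, x ∈ S ↔ x ∈ Scar := fun x => Iff.rfl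
  -- cardinality
  have hΓR_inf : Cardinal.aleph0 ≤ Gamma ↥R := le_max_right _ _
  have hcardA : Cardinal.mk ↥A ≤ Gamma ↥R := by
    refine (Algebra.cardinalMk_adjoin_le (↥R) ({t} : Set T)).trans ?_
    apply max_le (max_le (le_max_left _ _) _) hΓR_inf
    exact le_trans (by simp) hΓR_inf
  have hcardS : Cardinal.mk ↥S ≤ Gamma ↥R := by
    have hinj : ∃ f : ↥S → ↥A × ↥A, Function.Injective f := by
      refine ⟨fun x => ⟨⟨Classical.choose x.2, (Classical.choose_spec x.2).1⟩,
        ⟨Classical.choose (Classical.choose_spec x.2).2,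
         (Classical.choose_spec (Classical.choose_spec x.2).2).1⟩⟩, ?_⟩
      intro x y hxy
      have h1 : (Classical.choose x.2 : T) = Classical.choose y.2 :=
        congrArg (fun z : ↥A × ↥A => (z.1 : T)) hxy
      have h2 : (Classical.choose (Classical.choose_spec x.2).2 : T)
          = Classical.choose (Classical.choose_spec y.2).2 :=
        congrArg (fun z : ↥A × ↥A => (z.2 : T)) hxy
      have hx := Classical.choose_spec (Classical.choose_spec x.2).2
      have hy := Classical.choose_spec (Classical.choose_spec y.2).2
      have hu := hunit _ hx.2.1
      apply Subtype.ext
      have heq : (x : T) * Classical.choose (Classical.choose_spec x.2).2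
          = (y : T) * Classical.choose (Classical.choose_spec x.2).2 :=
        calc (x : T) * Classical.choose (Classical.choose_spec x.2).2
            = Classical.choose x.2 := hx.2.2
          _ = Classical.choose y.2 := h1
          _ = (y : T) * Classical.choose (Classical.choose_spec y.2).2 := hy.2.2.symm
          _ = (y : T) * Classical.choose (Classical.choose_spec x.2).2 :=
              congrArg (fun z => (y : T) * z) h2.symm
      exact hu.mul_left_cancel (by rw [mul_comm (x : T), mul_comm (y : T)] at heq; exact heq)
    obtain ⟨f, hf⟩ := hinj
    have hprod : Cardinal.mk (↥A × ↥A) ≤ Gamma ↥R := by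
      simp only [Cardinal.mk_prod, Cardinal.lift_id]
      exact (mul_le_mul' hcardA hcardA).trans_eq (Cardinal.mul_eq_self hΓR_inf)
    exact (Cardinal.mk_le_of_injective hf).trans hprod
  have hΓS : Gamma ↥S = Gamma ↥R := by
    apply le_antisymm (max_le hcardS hΓR_inf)
    apply max_le _ (le_max_right _ _)
    refine le_trans ?_ (le_max_left _ _)
    have hinj : Function.Injective (fun x : ↥R => (⟨x.1, hRS x.2⟩ : ↥S)) := by
      intro a b h
      simp only [Subtype.mk.injEq] at h
      exact Subtype.ext h
    exact Cardinal.mk_le_of_injective hinj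
  refine ⟨S, ⟨hRS hpR, ?_, hΓS ▸ hΓ, ?_, ?_⟩, hRS, ⟨t, hAS t htA, ht⟩, hΓS⟩
  · -- quasilocal
    rintro ⟨x, a, haA, b, hbA, hbm, hxb⟩ hx
    obtain ⟨u, hu⟩ := hunit x hx
    have hbu := hunit b hbm
    have ham : a ∉ IsLocalRing.maximalIdeal T := by
      rw [← hxb]; exact hunit' _ ((hunit x hx).mul hbu)
    have hinv : (↑u⁻¹ : T) ∈ S := by
      refine ⟨b, hbA, a, haA, ham, ?_⟩
      have : (↑u⁻¹ : T) * (x * b) = b := by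
        rw [← hu, ← mul_assoc, Units.inv_mul, one_mul]
      rwa [hxb] at this
    refine isUnit_iff_exists_inv.mpr ⟨⟨↑u⁻¹, hinv⟩, ?_⟩
    apply Subtype.ext
    show x * ↑u⁻¹ = 1
    rw [← hu, Units.mul_inv]
  · -- associated primes
    rintro P hPassoc x ⟨a, haA, b, hbA, hbm, hxb⟩ hxP
    obtain ⟨n, hn⟩ := K1 a haA
    have haP : p ^ n * a ∈ P := by
      rw [← hxb, ← mul_assoc]
      exact Ideal.mul_mem_right b P (Ideal.mul_mem_left P _ hxP)
    have h0 : p ^ n * a = 0 := hP P hPassoc _ hn haP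
    have ha0 : a = 0 := by
      have := (mem_nonZeroDivisors_iff.mp (hpow n)).2 a ?_
      · exact this
      · rwa [mul_comm] at h0
    have hx0 : x * b = 0 := by rw [hxb, ha0]
    exact ((hunit b hbm).mul_left_eq_zero).mp hx0
  · -- CompAvoid
    rintro i u ⟨q, hqQ, hqp, s, ⟨a₁, ha₁, b₁, hb₁, hb₁m, hs⟩, hu⟩ ⟨a₂, ha₂, b₂, hb₂, hb₂m, hub⟩
    obtain ⟨n, hn⟩ := K1 (a₂ * b₁) (mul_mem ha₂ hb₁)
    obtain ⟨m, hm⟩ := K1 (a₁ * b₂) (mul_mem ha₁ hb₂)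
    have hrR : p ^ (n + m) * (a₁ * b₂) ∈ R := by
      have : p ^ (n + m) * (a₁ * b₂) = p ^ n * (p ^ m * (a₁ * b₂)) := by ring
      rw [this]; exact mul_mem (pow_mem hpR n) hm
    have hvR : p ^ (n + m) * (a₂ * b₁) ∈ R := by
      have : p ^ (n + m) * (a₂ * b₁) = p ^ m * (p ^ n * (a₂ * b₁)) := by ring
      rw [this]; exact mul_mem (pow_mem hpR m) hn
    have hkey : p ^ (n + m) * (a₂ * b₁) = q * (p ^ (n + m) * (a₁ * b₂)) := by
      have h1 : a₂ * b₁ = u * b₂ * b₁ := by rw [hub]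
      have h2 : a₁ * b₂ = s * b₁ * b₂ := by rw [hs]
      rw [h1, h2, hu]; ring
    have h0 : p ^ (n + m) * (a₂ * b₁) = 0 :=
      hCA i _ ⟨q, hqQ, hqp, p ^ (n + m) * (a₁ * b₂), hrR, hkey⟩ hvR
    have hab0 : a₂ * b₁ = 0 := (mem_nonZeroDivisors_iff.mp (hpow (n + m))).2 _ (by rwa [mul_comm] at h0)
    have hu0 : u * (b₂ * b₁) = 0 := by rw [← mul_assoc, hub, hab0]
    have hbu := (hunit b₂ hb₂m).mul (hunit b₁ hb₁m)
    exact (hbu.mul_left_eq_zero).mp hu0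
end

section
/- Let Ω be a well-ordered set and let {R_α : α ∈ Ω} be a family of pca subrings of T such that R_α ⊆ R_β whenever α < β. Let S = ⋃_{α ∈ Ω} R_α. Then S ∩ P = (0) for every associated prime P of T, and ((Qᵢ \ pT)S) ∩ S = {0} for each i ∈ {1, …, k}. Furthermore, if Γ(R_α) ≤ λ for all α ∈ Ω, then Γ(S) ≤ λ·Γ(Ω); in particular, if Γ(Ω) ≤ λ and Γ(R_α) = λ for some α, then Γ(S) = λ. -/
universe u

/-- **Lemma 4 (unions).** Conclusions about the union of a chain of `p`ca subrings
indexed by a well-ordered set. -/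
theorem statement1
    {T : Type u} [CommRing T] [IsLocalRing T] [IsNoetherianRing T]
    [IsAdicComplete (IsLocalRing.maximalIdeal T) T]
    {k : ℕ} (hk : 0 < k) (Q : Fin k → Ideal T)
    (hQprime : ∀ i, (Q i).IsPrime)
    (hQnonmax : ∀ i, Q i ≠ IsLocalRing.maximalIdeal T)
    (hQinc : ∀ i j, Q i ≤ Q j → Q i = Q j)
    (p : T) (hp0 : p ≠ 0) (hpreg : p ∈ nonZeroDivisors T) (hpQ : ∀ i, p ∈ Q i)
    (Ω : Type u) [LinearOrder Ω] [WellFoundedLT Ω]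
    (Rfam : Ω → Subring T) (hpca : ∀ α : Ω, IsPcaSubring Q p (Rfam α))
    (hmono : ∀ α β : Ω, α < β → Rfam α ≤ Rfam β) :
    (∀ P ∈ associatedPrimes T T, ∀ x ∈ ⋃ α : Ω, (Rfam α : Set T), x ∈ P → x = 0) ∧
    (∀ i : Fin k, ∀ t ∈ CompAvoid (Q i) p (⋃ α : Ω, (Rfam α : Set T)),
      t ∈ ⋃ α : Ω, (Rfam α : Set T) → t = 0) ∧
    (∀ lam : Cardinal.{u}, Cardinal.aleph0 ≤ lam → (∀ α : Ω, Gamma ↥(Rfam α) ≤ lam) →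
      Gamma ↥(⋃ α : Ω, (Rfam α : Set T)) ≤ lam * Gamma Ω ∧
      (Gamma Ω ≤ lam → (∃ α : Ω, Gamma ↥(Rfam α) = lam) →
        Gamma ↥(⋃ α : Ω, (Rfam α : Set T)) = lam)) := by

  have hmono' : ∀ α β : Ω, α ≤ β → Rfam α ≤ Rfam β := by
    intro α β h
    rcases h.lt_or_eq with h | h
    · exact hmono _ _ h
    · subst h; exact le_rfl
  refine ⟨?_, ?_, ?_⟩
  · rintro P hP x hx hxP
    simp only [Set.mem_iUnion] at hx
    obtain ⟨α, hα⟩ := hx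
    exact (hpca α).2.2.2.1 P hP x hα hxP
  · rintro i t ⟨q, hq, hqp, r, hr, rfl⟩ ht
    simp only [Set.mem_iUnion] at hr ht
    obtain ⟨α, hα⟩ := hr
    obtain ⟨β, hβ⟩ := ht
    rcases le_total α β with h | h
    · exact (hpca β).2.2.2.2 i _ ⟨q, hq, hqp, r, hmono' _ _ h hα, rfl⟩ hβ
    · exact (hpca α).2.2.2.2 i _ ⟨q, hq, hqp, r, hα, rfl⟩ (hmono' _ _ h hβ)
  · intro lam hlam hle
    have hmk : ∀ α : Ω, Cardinal.mk ↥(Rfam α : Set T) ≤ lam := fun α =>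
      le_trans (le_max_left _ _) (hle α)
    have hsup : (⨆ α : Ω, Cardinal.mk ↥(Rfam α : Set T)) ≤ lam := by
      rcases isEmpty_or_nonempty Ω with h | h
      · rw [ciSup_of_empty]
        exact bot_le
      · exact ciSup_le' hmk
    have hUnion : Cardinal.mk ↥(⋃ α : Ω, (Rfam α : Set T)) ≤ Cardinal.mk Ω * lam :=
      (Cardinal.mk_iUnion_le _).trans (mul_le_mul_right hsup _)
    have hupper : Gamma ↥(⋃ α : Ω, (Rfam α : Set T)) ≤ lam * Gamma Ω := by
      refine max_le ?_ ?_
      · calc Cardinal.mk ↥(⋃ α : Ω, (Rfam α : Set T)) ≤ Cardinal.mk Ω * lam := hUnion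
          _ ≤ Gamma Ω * lam := mul_le_mul_left (le_max_left _ _) _
          _ = lam * Gamma Ω := mul_comm _ _
      · calc Cardinal.aleph0 ≤ lam := hlam
          _ ≤ lam * Gamma Ω := le_mul_of_one_le_right zero_le
            (le_trans (le_of_lt Cardinal.one_lt_aleph0) (le_max_right _ _))
    refine ⟨hupper, ?_⟩
    rintro hΩ ⟨α, hα⟩
    have h1 : lam * Gamma Ω = lam := by
      unfold Gamma
      rw [Cardinal.mul_eq_max hlam (le_max_right _ _)]
      exact max_eq_left hΩ
    refine le_antisymm (h1 ▸ hupper) ?_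
    rw [← hα]
    exact max_le_max (Cardinal.mk_le_mk_of_subset
      (Set.subset_iUnion (fun γ : Ω => (Rfam γ : Set T)) α)) le_rfl
end

section
/- Let (R, R ∩ 𝔪) be a pca subring of T. Then there exists a pca subring S of T with Γ(S) = Γ(R) such that R ⊆ S ⊆ T and pT ∩ R ⊆ pS. -/
universe u

/-- **Lemma 5 (Claim 2).** Given a `p`ca subring `R` of `T`, there is a `p`ca subring `S`
with `Γ(S) = Γ(R)`, `R ⊆ S ⊆ T` and `pT ∩ R ⊆ pS`. -/
theorem statement2
    {T : Type u} [CommRing T] [IsLocalRing T] [IsNoetherianRing T]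
    [IsAdicComplete (IsLocalRing.maximalIdeal T) T]
    {k : ℕ} (hk : 0 < k) (Q : Fin k → Ideal T)
    (hQprime : ∀ i, (Q i).IsPrime)
    (hQnonmax : ∀ i, Q i ≠ IsLocalRing.maximalIdeal T)
    (hQinc : ∀ i j, Q i ≤ Q j → Q i = Q j)
    (p : T) (hp0 : p ≠ 0) (hpreg : p ∈ nonZeroDivisors T) (hpQ : ∀ i, p ∈ Q i)
    (R : Subring T) (hR : IsPcaSubring Q p R) :
    ∃ S : Subring T, IsPcaSubring Q p S ∧ Gamma ↥S = Gamma ↥R ∧ R ≤ S ∧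
      (∀ x ∈ R, x ∈ Ideal.span {p} → ∃ s ∈ S, x = p * s) := by
  obtain ⟨hpR, hRql, hRcard, hRass, hRavoid⟩ := hR
  set 𝔪 := IsLocalRing.maximalIdeal T with h𝔪
  -- the set of "quotients by p" of elements of R
  set A : Set T := {t : T | p * t ∈ R} with hA
  set R' : Subring T := Subring.closure ((R : Set T) ∪ A) with hR'
  have hRsubR' : (R : Set T) ⊆ (R' : Set T) :=
    (Set.subset_union_left).trans Subring.subset_closure
  have hAsubR' : A ⊆ (R' : Set T) :=
    (Set.subset_union_right).trans Subring.subset_closure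
  -- powers of p clear "denominators": every element of R' lands in R after
  -- multiplication by a power of p
  have hclear : ∀ a ∈ R', ∃ d : ℕ, p ^ d * a ∈ R := by
    intro a ha
    induction ha using Subring.closure_induction with
    | mem x hx =>
      rcases hx with hx | hx
      · exact ⟨0, by simpa using hx⟩
      · exact ⟨1, by simpa using (show p * x ∈ R from hx)⟩
    | zero => exact ⟨0, by simpa using R.zero_mem⟩
    | one => exact ⟨0, by simpa using R.one_mem⟩
    | add x y hx hy ihx ihy =>
      obtain ⟨d, hd⟩ := ihx; obtain ⟨e, he⟩ := ihy
      refine ⟨d + e, ?_⟩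
      have : p ^ (d + e) * (x + y) = p ^ e * (p ^ d * x) + p ^ d * (p ^ e * y) := by
        ring
      rw [this]
      exact R.add_mem (R.mul_mem (R.pow_mem hpR e) hd) (R.mul_mem (R.pow_mem hpR d) he)
    | neg x hx ihx =>
      obtain ⟨d, hd⟩ := ihx
      exact ⟨d, by rw [mul_neg]; exact R.neg_mem hd⟩
    | mul x y hx hy ihx ihy =>
      obtain ⟨d, hd⟩ := ihx; obtain ⟨e, he⟩ := ihy
      refine ⟨d + e, ?_⟩
      have : p ^ (d + e) * (x * y) = (p ^ d * x) * (p ^ e * y) := by ring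
      rw [this]
      exact R.mul_mem hd he
  have h1m : (1 : T) ∉ 𝔪 := by
    intro h1
    exact (IsLocalRing.maximalIdeal.isMaximal T).ne_top (Ideal.eq_top_iff_one _ |>.2 h1)
  have hmprime : (𝔪 : Ideal T).IsPrime := (IsLocalRing.maximalIdeal.isMaximal T).isPrime
  -- the quasilocalization of R' inside T
  set Scar : Set T := {x : T | ∃ a ∈ R', ∃ u ∈ R', u ∉ 𝔪 ∧ x * u = a} with hScar
  have hmulmem : ∀ x ∈ Scar, ∀ y ∈ Scar, x * y ∈ Scar := by
    rintro x ⟨a, ha, u, hu, hum, hxa⟩ y ⟨b, hb, v, hv, hvm, hyb⟩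
    refine ⟨a * b, R'.mul_mem ha hb, u * v, R'.mul_mem hu hv,
      fun h => ((hmprime.mem_or_mem h).elim hum hvm), ?_⟩
    rw [← hxa, ← hyb]; ring
  set S : Subring T :=
    { carrier := Scar
      mul_mem' := fun hx hy => hmulmem _ hx _ hy
      one_mem' := ⟨1, R'.one_mem, 1, R'.one_mem, h1m, one_mul 1⟩
      add_mem' := by
        rintro x y ⟨a, ha, u, hu, hum, hxa⟩ ⟨b, hb, v, hv, hvm, hyb⟩
        refine ⟨a * v + b * u, R'.add_mem (R'.mul_mem ha hv) (R'.mul_mem hb hu),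
          u * v, R'.mul_mem hu hv,
          fun h => ((hmprime.mem_or_mem h).elim hum hvm), ?_⟩
        rw [← hxa, ← hyb]; ring
      zero_mem' := ⟨0, R'.zero_mem, 1, R'.one_mem, h1m, zero_mul 1⟩
      neg_mem' := by
        rintro x ⟨a, ha, u, hu, hum, hxa⟩
        exact ⟨-a, R'.neg_mem ha, u, hu, hum, by rw [← hxa]; ring⟩ } with hS
  have hSmem : ∀ x : T, x ∈ S ↔ x ∈ Scar := fun x => Iff.rfl
  have hR'subS : (R' : Set T) ⊆ (S : Set T) := by
    intro a ha
    exact ⟨a, ha, 1, R'.one_mem, h1m, mul_one a⟩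
  have hRS : R ≤ S := fun x hx => hR'subS (hRsubR' hx)
  -- units cancel against zero
  have hcancel : ∀ u : T, u ∉ 𝔪 → ∀ x : T, x * u = 0 → x = 0 := by
    intro u hu x hxu
    exact (IsUnit.mul_left_eq_zero (IsLocalRing.notMem_maximalIdeal.mp hu)).mp hxu
  have hpcancel : ∀ d : ℕ, ∀ x : T, p ^ d * x = 0 → x = 0 := by
    intro d x hx
    have hpd : p ^ d ∈ nonZeroDivisors T := pow_mem hpreg d
    exact hpd.2 x (by rw [mul_comm]; exact hx)
  -- Quasilocal
  have hSql : QuasilocalWithMaxIdeal S := by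
    rintro ⟨x, hxS⟩ hxm
    obtain ⟨a, ha, u, hu, hum, hxa⟩ := hxS
    have ham : a ∉ 𝔪 := by
      intro h
      rw [← hxa] at h
      exact (hmprime.mem_or_mem h).elim hxm hum
    obtain ⟨va, hva⟩ := IsLocalRing.notMem_maximalIdeal.mp ham
    set y : T := u * (↑va⁻¹ : T) with hy
    have hyS : y ∈ S := by
      refine ⟨u, hu, a, ha, ham, ?_⟩
      have : y * a = u * ((↑va⁻¹ : T) * ↑va) := by rw [hva]; ring
      rw [this, Units.inv_mul, mul_one]
    have hxy : x * y = 1 := by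
      have : x * y = (x * u) * (↑va⁻¹ : T) := by rw [hy]; ring
      rw [this, hxa, ← hva, Units.mul_inv]
    exact IsUnit.of_mul_eq_one (⟨y, hyS⟩ : S) (Subtype.ext hxy)
  -- p ∈ S
  have hpS : p ∈ S := hRS hpR
  -- associated primes
  have hSass : ∀ P ∈ associatedPrimes T T, ∀ x ∈ S, x ∈ P → x = 0 := by
    intro P hP x hxS hxP
    obtain ⟨a, ha, u, hu, hum, hxa⟩ := hxS
    obtain ⟨d, hd⟩ := hclear a ha
    have haP : p ^ d * a ∈ P := Ideal.mul_mem_left _ _ (hxa ▸ Ideal.mul_mem_right _ _ hxP)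
    have : p ^ d * a = 0 := hRass P hP _ hd haP
    have ha0 : a = 0 := hpcancel d a this
    exact hcancel u hum x (by rw [hxa, ha0])
  -- complement avoidance
  have hSavoid : ∀ i : Fin k, ∀ t ∈ CompAvoid (Q i) p (S : Set T), t ∈ S → t = 0 := by
    rintro i t ⟨q, hqQ, hqp, s, hsS, rfl⟩ htS
    obtain ⟨a, ha, u, hu, hum, hta⟩ := htS
    obtain ⟨b, hb, v, hv, hvm, hsb⟩ := hsS
    have hav : a * v = q * (b * u) := by
      rw [← hta, ← hsb]; ring
    obtain ⟨c, hc⟩ := hclear (a * v) (R'.mul_mem ha hv)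
    obtain ⟨f, hf⟩ := hclear (b * u) (R'.mul_mem hb hu)
    have hx : p ^ (c + f) * (a * v) ∈ (R : Set T) := by
      have : p ^ (c + f) * (a * v) = p ^ f * (p ^ c * (a * v)) := by ring
      rw [this]; exact R.mul_mem (R.pow_mem hpR f) hc
    have hr : p ^ (c + f) * (b * u) ∈ (R : Set T) := by
      have : p ^ (c + f) * (b * u) = p ^ c * (p ^ f * (b * u)) := by ring
      rw [this]; exact R.mul_mem (R.pow_mem hpR c) hf
    have hx0 : p ^ (c + f) * (a * v) = 0 := by
      refine hRavoid i _ ⟨q, hqQ, hqp, p ^ (c + f) * (b * u), hr, ?_⟩ hx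
      rw [hav]; ring
    have hav0 : a * v = 0 := hpcancel _ _ hx0
    have htuv : (q * s) * u * v = 0 := by rw [hta]; exact hav0
    have := hcancel v hvm _ htuv
    exact hcancel u hum _ this
  -- cardinality
  have hAcard : Cardinal.mk A ≤ Cardinal.mk R := by
    refine Cardinal.mk_le_of_injective (f := fun t : A => (⟨p * t, t.2⟩ : R)) ?_
    intro s t hst
    have : p * (s : T) = p * (t : T) := congrArg Subtype.val hst
    have h0 : ((s : T) - (t : T)) * p = 0 := by linear_combination this
    have := hpreg.2 _ h0
    exact Subtype.ext (by linear_combination this)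
  have hGR : Cardinal.aleph0 ≤ Gamma ↥R := le_max_right _ _
  have hR'card : Cardinal.mk R' ≤ Gamma ↥R := by
    have h1 : Cardinal.mk R' = Cardinal.mk (Algebra.adjoin ℤ ((R : Set T) ∪ A)) :=
      Cardinal.mk_congr (Subring.closureEquivAdjoinInt _).toEquiv
    have h2 := Algebra.lift_cardinalMk_adjoin_le ℤ ((R : Set T) ∪ A)
    simp only [Cardinal.lift_uzero, Cardinal.mk_int, Cardinal.lift_aleph0] at h2
    have h3 : Cardinal.mk ((R : Set T) ∪ A : Set T) ≤ Gamma ↥R := by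
      refine (Cardinal.mk_union_le _ _).trans ?_
      have : Cardinal.mk (R : Set T) = Cardinal.mk R := rfl
      calc Cardinal.mk (R : Set T) + Cardinal.mk A
          ≤ Gamma ↥R + Gamma ↥R := by
            exact add_le_add (le_max_left _ _) (hAcard.trans (le_max_left _ _))
        _ = Gamma ↥R := Cardinal.add_eq_self hGR
    rw [h1]
    refine h2.trans ?_
    exact sup_le (sup_le hGR h3) hGR
  have hScard : Cardinal.mk S ≤ Gamma ↥R := by
    have : ∀ s : S, ∃ au : R' × R', (au.2 : T) ∉ 𝔪 ∧ (s : T) * au.2 = au.1 := by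
      rintro ⟨x, a, ha, u, hu, hum, hxa⟩
      exact ⟨(⟨a, ha⟩, ⟨u, hu⟩), hum, hxa⟩
    choose g hg1 hg2 using this
    have hginj : Function.Injective g := by
      intro s t hst
      have h1 : (s : T) * ((g s).2 : T) = ((g s).1 : T) := hg2 s
      have h2 : (t : T) * ((g s).2 : T) = ((g s).1 : T) := by rw [hst]; exact hg2 t
      have : ((s : T) - t) * ((g s).2 : T) = 0 := by rw [sub_mul, h1, h2, sub_self]
      have := hcancel _ (hg1 s) _ this
      exact Subtype.ext (by linear_combination this)
    calc Cardinal.mk S ≤ Cardinal.mk (R' × R') := Cardinal.mk_le_of_injective hginj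
      _ = Cardinal.mk R' * Cardinal.mk R' := (Cardinal.mk_prod _ _).trans (by simp)
      _ ≤ Gamma ↥R * Gamma ↥R := mul_le_mul' hR'card hR'card
      _ = Gamma ↥R := Cardinal.mul_eq_self hGR
  have hGamma : Gamma ↥S = Gamma ↥R := by
    refine le_antisymm (max_le hScard hGR) (max_le ?_ (le_max_right _ _))
    refine le_trans ?_ (le_max_left _ _)
    exact Cardinal.mk_le_mk_of_subset hRS
  refine ⟨S, ⟨hpS, hSql, hGamma ▸ hRcard, hSass, hSavoid⟩, hGamma, hRS, ?_⟩
  intro x hxR hxp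
  obtain ⟨t, ht⟩ := Ideal.mem_span_singleton'.mp hxp
  have htA : t ∈ A := by
    show p * t ∈ R
    rw [mul_comm, ht]; exact hxR
  exact ⟨t, hR'subS (hAsubR' htA), by rw [← ht, mul_comm]⟩
end

section
/- Let (R, R ∩ 𝔪) be a pca subring of T. Then there exists a pca subring S of T with Γ(S) = Γ(R) such that R ⊆ S ⊆ T and pT ∩ S = pS. -/
universe u

open IsLocalRing

set_option linter.unusedSectionVars false

section Fix

variable {T : Type u} [CommRing T] [IsLocalRing T]

lemma aux_isUnit_of_not_mem {b : T} (hb : b ∉ maximalIdeal T) : IsUnit b := by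
  by_contra h
  exact hb ((mem_maximalIdeal b).mpr h)

lemma aux_eq_zero_of_mul_eq_zero {x b : T} (hb : b ∉ maximalIdeal T) (h : x * b = 0) :
    x = 0 := by
  obtain ⟨u, rfl⟩ := aux_isUnit_of_not_mem hb
  calc x = x * ↑u * ↑u⁻¹ := by rw [mul_assoc, Units.mul_inv, mul_one]
  _ = 0 := by rw [h, zero_mul]

lemma aux_one_not_mem : (1 : T) ∉ maximalIdeal T :=
  (Ideal.ne_top_iff_one _).mp (maximalIdeal.isMaximal T).ne_top

lemma aux_mul_not_mem {b b' : T} (hb : b ∉ maximalIdeal T) (hb' : b' ∉ maximalIdeal T) :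
    b * b' ∉ maximalIdeal T := fun h =>
  ((Ideal.IsMaximal.isPrime (maximalIdeal.isMaximal T)).mem_or_mem h).elim hb hb'

/-- Subring closure of `A` together with all `t` with `p * t ∈ A`. -/
def fixB (p : T) (A : Subring T) : Subring T :=
  Subring.closure (↑A ∪ {t : T | p * t ∈ A})

lemma mem_fixB_of_mem {p : T} {A : Subring T} {x : T} (hx : x ∈ A) : x ∈ fixB p A :=
  Subring.subset_closure (Or.inl hx)

lemma mem_fixB_of_p_mul {p : T} {A : Subring T} {t : T} (ht : p * t ∈ A) : t ∈ fixB p A :=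
  Subring.subset_closure (Or.inr ht)

lemma fixB_pow {p : T} {A : Subring T} (hpA : p ∈ A) {z : T} (hz : z ∈ fixB p A) :
    ∃ n : ℕ, p ^ n * z ∈ A := by
  induction hz using Subring.closure_induction with
  | mem x hx =>
    rcases hx with hx | hx
    · exact ⟨0, by simpa using hx⟩
    · exact ⟨1, by simpa [pow_one] using hx⟩
  | zero => exact ⟨0, by simpa using A.zero_mem⟩
  | one => exact ⟨0, by simpa using A.one_mem⟩
  | add x y hx hy ihx ihy =>
    obtain ⟨n, hn⟩ := ihx; obtain ⟨m, hm⟩ := ihy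
    refine ⟨n + m, ?_⟩
    have h : p ^ (n + m) * (x + y) = p ^ m * (p ^ n * x) + p ^ n * (p ^ m * y) := by ring
    rw [h]
    exact add_mem (mul_mem (pow_mem hpA m) hn) (mul_mem (pow_mem hpA n) hm)
  | neg x hx ih =>
    obtain ⟨n, hn⟩ := ih
    exact ⟨n, by rw [mul_neg]; exact neg_mem hn⟩
  | mul x y hx hy ihx ihy =>
    obtain ⟨n, hn⟩ := ihx; obtain ⟨m, hm⟩ := ihy
    refine ⟨n + m, ?_⟩
    have h : p ^ (n + m) * (x * y) = (p ^ n * x) * (p ^ m * y) := by ring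
    rw [h]; exact mul_mem hn hm

/-- Localization (inside `T`) of `fixB p A` at its maximal ideal. -/
def fixStep (p : T) (A : Subring T) : Subring T where
  carrier := {x : T | ∃ a ∈ fixB p A, ∃ b ∈ fixB p A, b ∉ maximalIdeal T ∧ x * b = a}
  one_mem' := ⟨1, one_mem _, 1, one_mem _, aux_one_not_mem, by ring⟩
  zero_mem' := ⟨0, zero_mem _, 1, one_mem _, aux_one_not_mem, by ring⟩
  add_mem' := by
    rintro x y ⟨a, ha, b, hb, hbm, hx⟩ ⟨a', ha', b', hb', hbm', hy⟩
    refine ⟨a * b' + a' * b, add_mem (mul_mem ha hb') (mul_mem ha' hb),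
      b * b', mul_mem hb hb', aux_mul_not_mem hbm hbm', ?_⟩
    calc (x + y) * (b * b') = (x * b) * b' + (y * b') * b := by ring
    _ = a * b' + a' * b := by rw [hx, hy]
  neg_mem' := by
    rintro x ⟨a, ha, b, hb, hbm, hx⟩
    exact ⟨-a, neg_mem ha, b, hb, hbm, by rw [neg_mul, hx]⟩
  mul_mem' := by
    rintro x y ⟨a, ha, b, hb, hbm, hx⟩ ⟨a', ha', b', hb', hbm', hy⟩
    refine ⟨a * a', mul_mem ha ha', b * b', mul_mem hb hb', aux_mul_not_mem hbm hbm', ?_⟩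
    calc (x * y) * (b * b') = (x * b) * (y * b') := by ring
    _ = a * a' := by rw [hx, hy]

lemma le_fixStep {p : T} {A : Subring T} : A ≤ fixStep p A := fun x hx =>
  ⟨x, mem_fixB_of_mem hx, 1, one_mem _, aux_one_not_mem, by ring⟩

lemma mem_fixStep_of_p_mul {p : T} {A : Subring T} {t : T} (ht : p * t ∈ A) :
    t ∈ fixStep p A :=
  ⟨t, mem_fixB_of_p_mul ht, 1, one_mem _, aux_one_not_mem, by ring⟩

end Fix

section Step

variable {T : Type u} [CommRing T] [IsLocalRing T]

lemma fixStep_assoc {p : T} {A : Subring T} (hpA : p ∈ A)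
    (hpreg : p ∈ nonZeroDivisors T)
    (hA : ∀ P ∈ associatedPrimes T T, ∀ x ∈ A, x ∈ P → x = 0) :
    ∀ P ∈ associatedPrimes T T, ∀ x ∈ fixStep p A, x ∈ P → x = 0 := by
  rintro P hP x ⟨a, ha, b, hb, hbm, hx⟩ hxP
  obtain ⟨n, hn⟩ := fixB_pow hpA ha
  have haP : p ^ n * a ∈ P := by
    rw [← hx, ← mul_assoc]
    exact Ideal.mul_mem_right _ _ (Ideal.mul_mem_left _ _ hxP)
  have h0 : p ^ n * a = 0 := hA P hP _ hn haP
  have ha0 : a = 0 := (pow_mem hpreg n).2 a (by rw [mul_comm]; exact h0)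
  exact aux_eq_zero_of_mul_eq_zero hbm (by rw [hx, ha0])

lemma fixStep_compAvoid {p : T} {A : Subring T} (hpA : p ∈ A)
    (hpreg : p ∈ nonZeroDivisors T) {Q : Ideal T}
    (hA : ∀ t ∈ CompAvoid Q p (A : Set T), t ∈ A → t = 0) :
    ∀ t ∈ CompAvoid Q p ((fixStep p A : Subring T) : Set T), t ∈ fixStep p A → t = 0 := by
  rintro t ⟨q, hq, hqp, r, ⟨a, ha, b, hb, hbm, hr⟩, htqr⟩ ⟨a', ha', b', hb', hbm', ht⟩
  obtain ⟨n, hn⟩ := fixB_pow hpA (mul_mem ha' hb)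
  obtain ⟨m, hm⟩ := fixB_pow hpA (mul_mem ha hb')
  have key : a' * b = q * (a * b') := by
    rw [← ht, ← hr]; rw [htqr]; ring
  have hmem1 : p ^ (n + m) * (a' * b) ∈ A := by
    have h : p ^ (n + m) * (a' * b) = p ^ m * (p ^ n * (a' * b)) := by ring
    rw [h]; exact mul_mem (pow_mem hpA m) hn
  have hmem2 : p ^ (n + m) * (a * b') ∈ A := by
    have h : p ^ (n + m) * (a * b') = p ^ n * (p ^ m * (a * b')) := by ring
    rw [h]; exact mul_mem (pow_mem hpA n) hm
  have hca : p ^ (n + m) * (a' * b) ∈ CompAvoid Q p (A : Set T) :=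
    ⟨q, hq, hqp, p ^ (n + m) * (a * b'), hmem2, by rw [key]; ring⟩
  have h0 : p ^ (n + m) * (a' * b) = 0 := hA _ hca hmem1
  have hab0 : a' * b = 0 := (pow_mem hpreg (n + m)).2 _ (by rw [mul_comm]; exact h0)
  have ha'0 : a' = 0 := aux_eq_zero_of_mul_eq_zero hbm hab0
  exact aux_eq_zero_of_mul_eq_zero hbm' (by rw [ht, ha'0])

lemma fixStep_quasilocal {p : T} (A : Subring T) :
    QuasilocalWithMaxIdeal (fixStep p A) := by
  rintro ⟨x, a, ha, b, hb, hbm, hx⟩ hxm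
  simp only at hxm
  have ham : a ∉ maximalIdeal T := by
    intro h
    rw [← hx] at h
    exact ((Ideal.IsMaximal.isPrime (maximalIdeal.isMaximal T)).mem_or_mem h).elim hxm hbm
  obtain ⟨u, hu⟩ := aux_isUnit_of_not_mem ham
  set y : T := b * ↑u⁻¹ with hy
  have hyA : y ∈ fixStep p A := by
    refine ⟨b, hb, a, ha, ham, ?_⟩
    rw [hy, mul_assoc, ← hu, Units.inv_mul, mul_one]
  have hxy : x * y = 1 := by
    rw [hy, ← mul_assoc, hx, ← hu, Units.mul_inv]
  exact isUnit_iff_exists_inv.mpr ⟨⟨y, hyA⟩, Subtype.ext (by simpa using hxy)⟩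

end Step






lemma gamma_mono {T : Type u} [CommRing T] {A B : Subring T} (h : A ≤ B) : Gamma ↥A ≤ Gamma ↥B :=
  max_le_max (Cardinal.mk_le_mk_of_subset (show (A : Set T) ⊆ B from h)) le_rfl

lemma fixB_card {T : Type u} [CommRing T] {p : T} {A : Subring T} (hpreg : p ∈ nonZeroDivisors T) :
    Cardinal.mk ↥(fixB p A) ≤ Gamma ↥A := by
  set s : Set T := ↑A ∪ {t : T | p * t ∈ A} with hs
  have h1 : Cardinal.mk ↥{t : T | p * t ∈ A} ≤ Cardinal.mk ↥A := by
    refine Cardinal.mk_le_of_injective (f := fun t => (⟨p * ↑t, t.2⟩ : A)) ?_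
    intro t1 t2 h
    have h' : p * (t1 : T) = p * (t2 : T) := congrArg Subtype.val h
    have h0 : ((t1 : T) - t2) = 0 := hpreg.2 _ (by
      rw [sub_mul, mul_comm (t1 : T) p, mul_comm (t2 : T) p, h', sub_self])
    exact Subtype.ext (sub_eq_zero.mp h0)
  have hsc : Cardinal.mk ↥s ≤ Gamma ↥A := by
    calc Cardinal.mk ↥s ≤ Cardinal.mk ↥(A : Set T) + Cardinal.mk ↥{t : T | p * t ∈ A} :=
        Cardinal.mk_union_le _ _
    _ ≤ Gamma ↥A + Gamma ↥A := by
        exact add_le_add (le_max_left _ _) (h1.trans (le_max_left _ _))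
    _ = Gamma ↥A := Cardinal.add_eq_self (le_max_right _ _)
  have e : Cardinal.mk ↥(fixB p A) = Cardinal.mk ↥(Algebra.adjoin ℤ s) :=
    Cardinal.mk_congr (Subring.closureEquivAdjoinInt s).toEquiv
  have hadj := Algebra.lift_cardinalMk_adjoin_le ℤ s
  rw [e]
  have hl : Cardinal.mk ↥(Algebra.adjoin ℤ s) ≤ max (Cardinal.mk ↥s) Cardinal.aleph0 := by
    have := hadj
    simp only [Cardinal.mk_int, Cardinal.lift_uzero, Cardinal.lift_aleph0] at this
    calc Cardinal.mk ↥(Algebra.adjoin ℤ s) ≤ Cardinal.aleph0 ⊔ Cardinal.mk ↥s ⊔ Cardinal.aleph0 :=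
      this
    _ ≤ max (Cardinal.mk ↥s) Cardinal.aleph0 := by
        simp [max_comm, max_assoc, max_left_comm]
  exact hl.trans (max_le hsc (le_max_right _ _))



lemma fixStep_gamma {T : Type u} [CommRing T] [IsLocalRing T]
    {p : T} {A : Subring T} (hpreg : p ∈ nonZeroDivisors T) :
    Gamma ↥(fixStep p A) = Gamma ↥A := by
  refine le_antisymm ?_ (gamma_mono le_fixStep)
  have hG : Cardinal.aleph0 ≤ Gamma ↥A := le_max_right _ _
  have hB : Cardinal.mk ↥(fixB p A) ≤ Gamma ↥A := fixB_card hpreg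
  set f : ↥(fixB p A) × ↥(fixB p A) → T :=
    fun z => (↑z.1 * Ring.inverse (↑z.2 : T) : T) with hf
  have hsub : ((fixStep p A : Subring T) : Set T) ⊆ Set.range f := by
    rintro x ⟨a, ha, b, hb, hbm, hx⟩
    refine ⟨(⟨a, ha⟩, ⟨b, hb⟩), ?_⟩
    show a * Ring.inverse b = x
    rw [← hx, mul_assoc, Ring.mul_inverse_cancel _ (aux_isUnit_of_not_mem hbm), mul_one]
  have hcard : Cardinal.mk ↥(fixStep p A) ≤ Gamma ↥A := by
    calc Cardinal.mk ↥(fixStep p A)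
        ≤ Cardinal.mk ↥(Set.range f) := Cardinal.mk_le_mk_of_subset hsub
    _ ≤ Cardinal.mk (↥(fixB p A) × ↥(fixB p A)) := Cardinal.mk_range_le
    _ = Cardinal.mk ↥(fixB p A) * Cardinal.mk ↥(fixB p A) := by
        simp [Cardinal.mk_prod]
    _ ≤ Gamma ↥A * Gamma ↥A := mul_le_mul' hB hB
    _ = Gamma ↥A := Cardinal.mul_eq_self hG
  exact max_le hcard hG

lemma fixStep_pca {T : Type u} [CommRing T] [IsLocalRing T] {k : ℕ}
    {Q : Fin k → Ideal T} {p : T} (hpreg : p ∈ nonZeroDivisors T)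
    {A : Subring T} (hA : IsPcaSubring Q p A) : IsPcaSubring Q p (fixStep p A) := by
  obtain ⟨hpA, hql, hcard, hassoc, hca⟩ := hA
  refine ⟨le_fixStep hpA, fixStep_quasilocal A, ?_, fixStep_assoc hpA hpreg hassoc,
    fun i => fixStep_compAvoid hpA hpreg (hca i)⟩
  rw [fixStep_gamma hpreg]
  exact hcard

/-- The chain of iterated fix steps. -/
def fixChain {T : Type u} [CommRing T] [IsLocalRing T] (p : T) (R : Subring T) :
    ℕ → Subring T
  | 0 => R
  | n + 1 => fixStep p (fixChain p R n)

lemma fixChain_mono {T : Type u} [CommRing T] [IsLocalRing T] (p : T) (R : Subring T) :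
    Monotone (fixChain p R) :=
  monotone_nat_of_le_succ fun _ => le_fixStep


/-- **Lemma 6 (fixing).** Given a `p`ca subring `R` of `T`, there is a `p`ca subring `S`
with `Γ(S) = Γ(R)`, `R ⊆ S ⊆ T` and `pT ∩ S = pS`. -/
theorem statement3
    {T : Type u} [CommRing T] [IsLocalRing T] [IsNoetherianRing T]
    [IsAdicComplete (IsLocalRing.maximalIdeal T) T]
    {k : ℕ} (hk : 0 < k) (Q : Fin k → Ideal T)
    (hQprime : ∀ i, (Q i).IsPrime)
    (hQnonmax : ∀ i, Q i ≠ IsLocalRing.maximalIdeal T)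
    (hQinc : ∀ i j, Q i ≤ Q j → Q i = Q j)
    (p : T) (hp0 : p ≠ 0) (hpreg : p ∈ nonZeroDivisors T) (hpQ : ∀ i, p ∈ Q i)
    (R : Subring T) (hR : IsPcaSubring Q p R) :
    ∃ S : Subring T, IsPcaSubring Q p S ∧ Gamma ↥S = Gamma ↥R ∧ R ≤ S ∧
      (∀ x ∈ S, x ∈ Ideal.span {p} ↔ ∃ s ∈ S, x = p * s) := by
  classical
  set C : ℕ → Subring T := fixChain p R with hC
  have hmono : Monotone C := fixChain_mono p R
  have hdir : Directed (· ≤ ·) C := hmono.directed_le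
  set S : Subring T := ⨆ n, C n with hS
  have hmem : ∀ x : T, x ∈ S ↔ ∃ n, x ∈ C n := fun x => Subring.mem_iSup_of_directed hdir
  have hCpca : ∀ n, IsPcaSubring Q p (C n) := by
    intro n; induction n with
    | zero => exact hR
    | succ n ih => exact fixStep_pca hpreg ih
  have hCg : ∀ n, Gamma ↥(C n) = Gamma ↥R := by
    intro n; induction n with
    | zero => rfl
    | succ n ih =>
      rw [show C (n + 1) = fixStep p (C n) from rfl, fixStep_gamma hpreg, ih]
  have hRS : R ≤ S := le_iSup C 0
  have hGamma : Gamma ↥S = Gamma ↥R := by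
    refine le_antisymm ?_ (gamma_mono hRS)
    have hcoe : (S : Set T) = ⋃ n, (C n : Set T) := Subring.coe_iSup_of_directed hdir
    have hun : Cardinal.mk ↥(⋃ n, (C n : Set T)) ≤ Gamma ↥R := by
      have h := Cardinal.mk_iUnion_le_lift (f := fun n : ℕ => (C n : Set T))
      simp only [Cardinal.lift_uzero, Cardinal.mk_nat, Cardinal.lift_aleph0] at h
      refine h.trans ?_
      have h2 : (⨆ n, Cardinal.mk ↥(C n : Set T)) ≤ Gamma ↥R :=
        ciSup_le fun n => (le_max_left _ _).trans (hCg n).le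
      calc Cardinal.aleph0 * ⨆ n, Cardinal.mk ↥(C n : Set T)
          ≤ Gamma ↥R * Gamma ↥R := mul_le_mul' (le_max_right _ _) h2
      _ = Gamma ↥R := Cardinal.mul_eq_self (le_max_right _ _)
    have hmkS : Cardinal.mk ↥(S : Set T) ≤ Gamma ↥R := by rw [hcoe]; exact hun
    exact max_le hmkS (le_max_right _ _)
  refine ⟨S, ⟨hRS hR.1, ?_, ?_, ?_, ?_⟩, hGamma, hRS, ?_⟩
  · rintro ⟨x, hxS⟩ hxm
    obtain ⟨n, hn⟩ := (hmem x).mp hxS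
    have hu := (hCpca n).2.1 ⟨x, hn⟩ hxm
    obtain ⟨⟨y, hyCn⟩, hy⟩ := isUnit_iff_exists_inv.mp hu
    have hxy : x * y = 1 := by
      have := congrArg (Subtype.val : ↥(C n) → T) hy
      simpa using this
    exact isUnit_iff_exists_inv.mpr
      ⟨⟨y, (hmem y).mpr ⟨n, hyCn⟩⟩, Subtype.ext (by simpa using hxy)⟩
  · rw [hGamma]; exact hR.2.2.1
  · intro P hP x hxS hxP
    obtain ⟨n, hn⟩ := (hmem x).mp hxS
    exact (hCpca n).2.2.2.1 P hP x hn hxP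
  · rintro i t ⟨q, hq, hqp, r, hrS, htqr⟩ htS
    obtain ⟨n, hn⟩ := (hmem r).mp hrS
    obtain ⟨m, hm⟩ := (hmem t).mp htS
    exact (hCpca (max n m)).2.2.2.2 i t
      ⟨q, hq, hqp, r, hmono (le_max_left n m) hn, htqr⟩
      (hmono (le_max_right n m) hm)
  · intro x hxS
    constructor
    · intro hx
      obtain ⟨t, ht⟩ := Ideal.mem_span_singleton.mp hx
      obtain ⟨n, hn⟩ := (hmem x).mp hxS
      have htC : t ∈ C (n + 1) := by
        show t ∈ fixStep p (C n)
        exact mem_fixStep_of_p_mul (by rw [← ht]; exact hn)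
      exact ⟨t, (hmem t).mpr ⟨n + 1, htC⟩, ht⟩
    · rintro ⟨s, hs, rfl⟩
      exact Ideal.mem_span_singleton.mpr ⟨s, rfl⟩
end

section
/- Suppose dim T ≥ 1 and every associated prime P of the T-module T/pT satisfies P ⊆ ⋃_{i=1}^k Qᵢ. Let (R, R ∩ 𝔪) be a pca subring of T such that pT ∩ R = pR, let J be an ideal of T with J ⊄ Qᵢ for all i ∈ {1, …, k}, and let u + J ∈ T/J. Then there exists an infinite pca subring S of T such that: (1) R ⊆ S ⊆ T; (2) Γ(S) = Γ(R); (3) u + J is in the image of the canonical map S → T/J; (4) if u ∈ J, then S ∩ J ⊄ Qᵢ for each i ∈ {1, …, k}; and (5) pT ∩ S = pS. -/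
universe u

namespace Statement4Aux
open Cardinal Polynomial

variable {T : Type u} [CommRing T]

/-- a chosen section of the quotient map -/
noncomputable def sec (I : Ideal T) : T ⧸ I → T :=
  Function.surjInv Ideal.Quotient.mk_surjective

lemma sec_spec (I : Ideal T) (z : T ⧸ I) : Ideal.Quotient.mk I (sec I z) = z :=
  Function.surjInv_eq _ _

lemma sub_sec_mem (I : Ideal T) (t : T) : t - sec I (Ideal.Quotient.mk I t) ∈ I := by
  rw [← Ideal.Quotient.eq_zero_iff_mem]
  simp [sec_spec]

lemma smul_top_eq (I : Ideal T) : (I • (⊤ : Ideal T)) = I := by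
  rw [smul_eq_mul, Ideal.mul_top]

/-- recursive digits -/
noncomputable def rfun (c : T → T → T) (s : Finset T) : T → (k : ℕ) → (Fin k → {y // y ∈ s}) → T
  | t, 0, _ => t
  | t, (k+1), w => c (rfun c s t k (fun j => w j.succ)) (w 0).val

noncomputable def mono (s : Finset T) (k : ℕ) (w : Fin k → {y // y ∈ s}) : T :=
  ∏ j, (w j).val

lemma mono_mem_pow (s : Finset T) (I : Ideal T) (hs : ∀ y ∈ s, y ∈ I) :
    ∀ (k : ℕ) (w : Fin k → {y // y ∈ s}), mono s k w ∈ I ^ k := by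
  intro k
  induction k with
  | zero => intro w; simp [mono]
  | succ n ih =>
    intro w
    have : mono s (n+1) w = (w 0).val * mono s n (fun j => w j.succ) := by
      rw [mono, Fin.prod_univ_succ]; rfl
    rw [this, pow_succ']
    exact Ideal.mul_mem_mul (hs _ (w 0).2) (ih _)

section expand

variable (mI : Ideal T) (s : Finset T) (c : T → T → T)

lemma rfun_zero (t : T) (w : Fin 0 → {y // y ∈ s}) : rfun c s t 0 w = t := rfl

lemma rfun_cons (t : T) (k : ℕ) (a : {y // y ∈ s}) (w : Fin k → {y // y ∈ s}) :
    rfun c s t (k+1) (Fin.cons (α := fun _ => {y // y ∈ s}) a w) = c (rfun c s t k w) a.val := by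
  have hs0 : (fun j : Fin k => (Fin.cons (α := fun _ => {y // y ∈ s}) a w) j.succ) = w := by
    funext j; exact Fin.cons_succ _ _ _
  show c (rfun c s t k (fun j => (Fin.cons (α := fun _ => {y // y ∈ s}) a w) j.succ))
      ((Fin.cons (α := fun _ => {y // y ∈ s}) a w) 0).val = _
  rw [hs0, Fin.cons_zero]

lemma rfun_expand (hc : ∀ t : T, ∑ i ∈ s, c t i * i = t - sec mI (Ideal.Quotient.mk mI t))
    (t : T) : ∀ n : ℕ,
    t = (∑ k ∈ Finset.range n, ∑ w : Fin k → {y // y ∈ s},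
          sec mI (Ideal.Quotient.mk mI (rfun c s t k w)) * mono s k w)
      + ∑ w : Fin n → {y // y ∈ s}, mono s n w * rfun c s t n w := by
  intro n
  induction n with
  | zero =>
    simp only [Finset.range_zero, Finset.sum_empty, zero_add]
    have hz : ∀ w : Fin 0 → {y // y ∈ s}, mono s 0 w * rfun c s t 0 w = t := by
      intro w; simp [mono, rfun_zero]
    rw [Finset.sum_congr rfl (fun w _ => hz w), Finset.sum_const]
    simp
  | succ n ih =>
    rw [Finset.sum_range_succ]
    have hexp : ∀ w : Fin n → {y // y ∈ s},
        mono s n w * rfun c s t n w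
          = sec mI (Ideal.Quotient.mk mI (rfun c s t n w)) * mono s n w
            + ∑ a : {y // y ∈ s}, mono s (n+1) (Fin.cons a w) * rfun c s t (n+1) (Fin.cons a w) := by
      intro w
      have h1 : rfun c s t n w
          = sec mI (Ideal.Quotient.mk mI (rfun c s t n w)) + ∑ i ∈ s, c (rfun c s t n w) i * i := by
        rw [hc]; ring
      have h2 : ∀ a : {y // y ∈ s}, mono s (n+1) (Fin.cons a w) = a.val * mono s n w := by
        intro a
        rw [mono, Fin.prod_univ_succ]
        simp [Fin.cons_succ, Fin.cons_zero, mono]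
      calc mono s n w * rfun c s t n w
          = sec mI (Ideal.Quotient.mk mI (rfun c s t n w)) * mono s n w
            + ∑ i ∈ s, mono s n w * (c (rfun c s t n w) i * i) := by
            rw [← Finset.mul_sum, mul_comm (mono s n w)]
            nth_rewrite 1 [h1]
            ring
        _ = _ := by
            congr 1
            rw [← Finset.sum_coe_sort s (fun i => mono s n w * (c (rfun c s t n w) i * i))]
            apply Finset.sum_congr rfl
            intro a _
            rw [h2 a, rfun_cons]
            ring
    have key : ∑ w : Fin n → {y // y ∈ s}, mono s n w * rfun c s t n w
        = (∑ w : Fin n → {y // y ∈ s},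
            sec mI (Ideal.Quotient.mk mI (rfun c s t n w)) * mono s n w)
          + ∑ w : Fin (n+1) → {y // y ∈ s}, mono s (n+1) w * rfun c s t (n+1) w := by
      rw [Finset.sum_congr rfl (fun w _ => hexp w), Finset.sum_add_distrib]
      congr 1
      rw [Finset.sum_comm, ← Fintype.sum_prod_type']
      exact Fintype.sum_equiv (Fin.consEquiv (fun _ => {y // y ∈ s})) _ _ (fun ⟨a, w⟩ => rfl)
    rw [add_assoc, ← key]
    exact ih

end expand

section cardle

theorem card_le_pow [IsLocalRing T] [IsNoetherianRing T]
    [IsAdicComplete (IsLocalRing.maximalIdeal T) T] :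
    Cardinal.mk T ≤ Cardinal.mk (T ⧸ IsLocalRing.maximalIdeal T) ^ Cardinal.aleph0.{u} := by
  classical
  set mI := IsLocalRing.maximalIdeal T with hmI
  obtain ⟨s, hs⟩ : mI.FG := IsNoetherian.noetherian mI
  have hex : ∀ t : T, ∃ f : T → T, ∑ i ∈ s, f i * i = t - sec mI (Ideal.Quotient.mk mI t) := by
    intro t
    have ht : t - sec mI (Ideal.Quotient.mk mI t) ∈ Submodule.span T (↑s : Set T) := by
      show _ ∈ Ideal.span (↑s : Set T)
      rw [hs]; exact sub_sec_mem mI t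
    obtain ⟨f, -, hf⟩ := Submodule.mem_span_finset.mp ht
    exact ⟨f, by simpa [smul_eq_mul] using hf⟩
  choose c hc using hex
  have hsm : ∀ y ∈ s, y ∈ mI := fun y hy => hs ▸ Submodule.subset_span hy
  set Φ : T → ((Σ k : ℕ, (Fin k → {y // y ∈ s})) → (T ⧸ mI)) :=
    fun t kw => Ideal.Quotient.mk mI (rfun c s t kw.1 kw.2) with hΦ
  have hinj : Function.Injective Φ := by
    intro t t' h
    have htail : ∀ v : T, ∀ n : ℕ,
        (∑ w : Fin n → {y // y ∈ s}, mono s n w * rfun c s v n w) ∈ mI ^ n := by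
      intro v n
      apply Ideal.sum_mem
      intro w _
      exact Ideal.mul_mem_right _ _ (mono_mem_pow s mI hsm n w)
    have hdiff : ∀ n : ℕ, t - t' ∈ mI ^ n := by
      intro n
      have e1 := rfun_expand mI s c hc t n
      have e2 := rfun_expand mI s c hc t' n
      have hsum : (∑ k ∈ Finset.range n, ∑ w : Fin k → {y // y ∈ s},
          sec mI (Ideal.Quotient.mk mI (rfun c s t k w)) * mono s k w)
        = ∑ k ∈ Finset.range n, ∑ w : Fin k → {y // y ∈ s},
          sec mI (Ideal.Quotient.mk mI (rfun c s t' k w)) * mono s k w := by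
        apply Finset.sum_congr rfl; intro k _
        apply Finset.sum_congr rfl; intro w _
        have hkw := congrFun h ⟨k, w⟩
        simp only [hΦ] at hkw
        rw [hkw]
      have heq : t - t' = (∑ w : Fin n → {y // y ∈ s}, mono s n w * rfun c s t n w)
          - (∑ w : Fin n → {y // y ∈ s}, mono s n w * rfun c s t' n w) := by
        nth_rewrite 1 [e1]
        nth_rewrite 1 [e2]
        rw [hsum]; ring
      rw [heq]
      exact sub_mem (htail t n) (htail t' n)
    have hz : t - t' = 0 := by
      refine IsHausdorff.haus (inferInstance : IsHausdorff mI T) (t - t') (fun n => ?_)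
      rw [SModEq.zero, smul_top_eq]
      exact hdiff n
    exact sub_eq_zero.mp hz
  have h1 : Cardinal.mk T ≤ Cardinal.mk ((Σ k : ℕ, (Fin k → {y // y ∈ s})) → (T ⧸ mI)) :=
    Cardinal.mk_le_of_injective hinj
  have h2 : Cardinal.mk ((Σ k : ℕ, (Fin k → {y // y ∈ s})) → (T ⧸ mI))
      = Cardinal.mk (T ⧸ mI) ^ Cardinal.mk (Σ k : ℕ, (Fin k → {y // y ∈ s})) :=
    (Cardinal.power_def _ _).symm
  have h3 : Cardinal.mk (Σ k : ℕ, (Fin k → {y // y ∈ s})) ≤ Cardinal.aleph0 :=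
    Cardinal.mk_le_aleph0
  have h4 : Cardinal.mk (T ⧸ mI) ≠ 0 := Cardinal.mk_ne_zero _
  calc Cardinal.mk T ≤ _ := h1
    _ = _ := h2
    _ ≤ Cardinal.mk (T ⧸ mI) ^ Cardinal.aleph0.{u} := Cardinal.power_le_power_left h4 h3

end cardle

section cardge

theorem pow_le_card_quot [IsLocalRing T]
    [IsAdicComplete (IsLocalRing.maximalIdeal T) T]
    (P : Ideal T) (hP : P.IsPrime) (hPne : P ≠ IsLocalRing.maximalIdeal T) :
    Cardinal.mk (T ⧸ IsLocalRing.maximalIdeal T) ^ Cardinal.aleph0.{u} ≤ Cardinal.mk (T ⧸ P) := by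
  classical
  set mI := IsLocalRing.maximalIdeal T with hmI
  have hPle : P ≤ mI := IsLocalRing.le_maximalIdeal hP.ne_top
  obtain ⟨t, htm, htP⟩ := SetLike.exists_of_lt (lt_of_le_of_ne hPle hPne)
  set F : (ℕ → T ⧸ mI) → ℕ → T := fun a n => ∑ k ∈ Finset.range n, sec mI (a k) * t ^ k with hF
  have hterm : ∀ (a : ℕ → T ⧸ mI) (k : ℕ) (N : ℕ), N ≤ k → sec mI (a k) * t ^ k ∈ mI ^ N :=
    fun a k N hNk => Ideal.mul_mem_left _ _ (Ideal.pow_le_pow_right hNk (Ideal.pow_mem_pow htm k))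
  have hcauchy : ∀ a : ℕ → T ⧸ mI, ∀ {m n : ℕ}, m ≤ n →
      F a m ≡ F a n [SMOD (mI ^ m • ⊤ : Ideal T)] := by
    intro a m n hmn
    rw [SModEq.sub_mem, smul_top_eq]
    have hIco : F a n - F a m = ∑ k ∈ Finset.Ico m n, sec mI (a k) * t ^ k := by
      rw [hF]; simp only
      rw [Finset.sum_Ico_eq_sub _ hmn]
    have : F a n - F a m ∈ mI ^ m := by
      rw [hIco]
      exact Ideal.sum_mem _ (fun k hk => hterm a k m (Finset.mem_Ico.mp hk).1)
    simpa using neg_mem this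
  have hLex : ∀ a : ℕ → T ⧸ mI, ∃ L : T, ∀ n, F a n ≡ L [SMOD (mI ^ n • ⊤ : Ideal T)] :=
    fun a => IsPrecomplete.prec (inferInstance : IsPrecomplete mI T) (fun {m n} h => hcauchy a h)
  choose L hL using hLex
  have hLmem : ∀ a n, L a - F a n ∈ mI ^ n := by
    intro a n
    have h := hL a n
    rw [SModEq.sub_mem, smul_top_eq] at h
    simpa using neg_mem h
  have hshift : ∀ (a : ℕ → T ⧸ mI) (n : ℕ),
      L a = F a n + t ^ n * L (fun k => a (n + k)) := by
    intro a n
    have hz : L a - F a n - t ^ n * L (fun k => a (n + k)) = 0 := by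
      refine IsHausdorff.haus (inferInstance : IsHausdorff mI T) _ (fun N => ?_)
      rw [SModEq.zero, smul_top_eq]
      have h1 : L a - F a (n + N) ∈ mI ^ (n + N) := hLmem a (n + N)
      have h2 : L (fun k => a (n + k)) - F (fun k => a (n + k)) N ∈ mI ^ N := hLmem _ N
      have h3 : t ^ n * (L (fun k => a (n + k)) - F (fun k => a (n + k)) N) ∈ mI ^ (n + N) := by
        rw [pow_add]
        exact Ideal.mul_mem_mul (Ideal.pow_mem_pow htm n) h2
      have h4 : F a (n + N) - F a n = t ^ n * F (fun k => a (n + k)) N := by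
        rw [hF]; simp only
        rw [← Finset.sum_Ico_eq_sub _ (Nat.le_add_right n N)]
        rw [Finset.mul_sum]
        rw [Finset.sum_Ico_eq_sum_range]
        rw [Nat.add_sub_cancel_left]
        refine Finset.sum_congr rfl (fun k _ => ?_)
        rw [pow_add]; ring
      have hmain : L a - F a n - t ^ n * L (fun k => a (n + k)) ∈ mI ^ (n + N) := by
        have heq : L a - F a n - t ^ n * L (fun k => a (n + k))
            = (L a - F a (n + N)) + (F a (n + N) - F a n)
              - t ^ n * L (fun k => a (n + k)) := by ring
        rw [heq, h4]
        have heq2 : L a - F a (n + N) + t ^ n * F (fun k => a (n + k)) N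
            - t ^ n * L (fun k => a (n + k))
            = (L a - F a (n + N)) - t ^ n * (L (fun k => a (n + k)) - F (fun k => a (n + k)) N) := by
          ring
        rw [heq2]
        exact sub_mem h1 h3
      exact Ideal.pow_le_pow_right (Nat.le_add_left N n) hmain
    have hz2 : L a - (F a n + t ^ n * L (fun k => a (n + k))) = 0 := by
      rw [sub_add_eq_sub_sub]; exact hz
    exact sub_eq_zero.mp hz2
  set G : (ULift.{u} ℕ → T ⧸ mI) → T ⧸ P := fun a => Ideal.Quotient.mk P (L (fun n => a ⟨n⟩))
    with hG
  have hGinj : Function.Injective G := by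
    intro a b hab
    by_contra hne
    set a' : ℕ → T ⧸ mI := fun n => a ⟨n⟩ with ha'
    set b' : ℕ → T ⧸ mI := fun n => b ⟨n⟩ with hb'
    have hne' : ∃ n, a' n ≠ b' n := by
      by_contra h
      push_neg at h
      exact hne (funext fun n => h n.down)
    set n₀ := Nat.find hne' with hn₀def
    have hn₀ : a' n₀ ≠ b' n₀ := Nat.find_spec hne'
    have hmin : ∀ k, k < n₀ → a' k = b' k := fun k hk => not_not.mp (Nat.find_min hne' hk)
    set d : T := sec mI (a' n₀) - sec mI (b' n₀) with hd_def
    have hd : d ∉ mI := by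
      intro hdm
      apply hn₀
      have : Ideal.Quotient.mk mI d = 0 := (Ideal.Quotient.eq_zero_iff_mem).mpr hdm
      rw [hd_def, map_sub, sec_spec, sec_spec] at this
      exact (sub_eq_zero.mp this)
    have hFd : F a' (n₀+1) - F b' (n₀+1) = t ^ n₀ * d := by
      rw [hF]; simp only
      rw [Finset.sum_range_succ, Finset.sum_range_succ]
      have hagree : ∑ k ∈ Finset.range n₀, sec mI (a' k) * t ^ k
          = ∑ k ∈ Finset.range n₀, sec mI (b' k) * t ^ k := by
        refine Finset.sum_congr rfl (fun k hk => ?_)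
        rw [hmin k (Finset.mem_range.mp hk)]
      rw [hagree, hd_def]; ring
    have hsplit : L a' - L b' = t ^ n₀ * (d + t * (L (fun k => a' (n₀+1+k)) - L (fun k => b' (n₀+1+k)))) := by
      rw [hshift a' (n₀+1), hshift b' (n₀+1)]
      have : F a' (n₀+1) + t ^ (n₀+1) * L (fun k => a' (n₀+1+k))
          - (F b' (n₀+1) + t ^ (n₀+1) * L (fun k => b' (n₀+1+k)))
          = (F a' (n₀+1) - F b' (n₀+1))
            + t ^ (n₀+1) * (L (fun k => a' (n₀+1+k)) - L (fun k => b' (n₀+1+k))) := by ring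
      rw [this, hFd, pow_succ]
      ring
    have hmem : L a' - L b' ∈ P := by
      rw [← Ideal.Quotient.eq]
      exact hab
    rw [hsplit] at hmem
    rcases hP.mem_or_mem hmem with h | h
    · exact htP (hP.mem_of_pow_mem _ h)
    · have hdm : d ∈ mI := by
        have h1 : d + t * (L (fun k => a' (n₀+1+k)) - L (fun k => b' (n₀+1+k))) ∈ mI := hPle h
        have h2 : t * (L (fun k => a' (n₀+1+k)) - L (fun k => b' (n₀+1+k))) ∈ mI :=
          Ideal.mul_mem_right _ _ htm
        simpa using sub_mem h1 h2
      exact hd hdm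
  have hcard : Cardinal.mk (ULift.{u} ℕ → T ⧸ mI) = Cardinal.mk (T ⧸ mI) ^ Cardinal.aleph0.{u} := by
    rw [← Cardinal.power_def]
    congr 1
  calc Cardinal.mk (T ⧸ mI) ^ Cardinal.aleph0.{u}
      = Cardinal.mk (ULift.{u} ℕ → T ⧸ mI) := hcard.symm
    _ ≤ Cardinal.mk (T ⧸ P) := Cardinal.mk_le_of_injective hGinj

theorem card_quot_eq [IsLocalRing T] [IsNoetherianRing T]
    [IsAdicComplete (IsLocalRing.maximalIdeal T) T]
    (P : Ideal T) (hP : P.IsPrime) (hPne : P ≠ IsLocalRing.maximalIdeal T) :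
    Cardinal.mk T ≤ Cardinal.mk (T ⧸ P) :=
  le_trans card_le_pow (pow_le_card_quot P hP hPne)

end cardge

section avoid

theorem exists_avoid (B : (P : Ideal T) → Set (T ⧸ P)) :
    ∀ (C : Finset (Ideal T)), (∀ P ∈ C, P.IsPrime) →
    (∀ P ∈ C, ∀ P' ∈ C, P ≤ P' → P = P') →
    (∀ P ∈ C, Cardinal.mk T ≤ Cardinal.mk (T ⧸ P)) →
    (∀ P ∈ C, Cardinal.mk (B P) < Cardinal.mk T) →
    ∀ (I : Ideal T) (u : T), (∀ P ∈ C, ¬ I ≤ P) →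
    ∃ x : T, x - u ∈ I ∧ ∀ P ∈ C, Ideal.Quotient.mk P x ∉ B P := by
  classical
  intro C
  induction C using Finset.strongInduction with
  | _ C ih =>
    intro hCprime hCinc hCcard hB I u hI
    rcases C.eq_empty_or_nonempty with rfl | ⟨P₀, hP₀⟩
    · exact ⟨u, by simp, by simp⟩
    · have hP₀prime := hCprime P₀ hP₀
      haveI : P₀.IsPrime := hP₀prime
      obtain ⟨i₀, hi₀I, hi₀P⟩ := SetLike.not_le_iff_exists.mp (hI P₀ hP₀)
      have hi₀ne : Ideal.Quotient.mk P₀ i₀ ≠ 0 :=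
        fun h => hi₀P (Ideal.Quotient.eq_zero_iff_mem.mp h)
      have hstep : ∃ z ∈ I, Ideal.Quotient.mk P₀ (u + z) ∉ B P₀ := by
        by_contra hcon
        push_neg at hcon
        have hsub : ∀ y ∈ I.map (Ideal.Quotient.mk P₀), (Ideal.Quotient.mk P₀ u + y) ∈ B P₀ := by
          intro y hy
          obtain ⟨z, hzI, rfl⟩ :=
            (Ideal.mem_map_iff_of_surjective _ Ideal.Quotient.mk_surjective).mp hy
          rw [← map_add]
          exact hcon z hzI
        have hi₀mem : Ideal.Quotient.mk P₀ i₀ ∈ I.map (Ideal.Quotient.mk P₀) :=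
          Ideal.mem_map_of_mem _ hi₀I
        set e : (T ⧸ P₀) → (B P₀) := fun w =>
          ⟨Ideal.Quotient.mk P₀ u + (Ideal.Quotient.mk P₀ i₀) * w,
            hsub _ (Ideal.mul_mem_right _ _ hi₀mem)⟩ with he
        have einj : Function.Injective e := by
          intro w₁ w₂ h
          have h' := Subtype.ext_iff.mp h
          simp only [he] at h'
          exact mul_left_cancel₀ hi₀ne (add_left_cancel h')
        have hle : Cardinal.mk T ≤ Cardinal.mk (B P₀) :=
          le_trans (hCcard P₀ hP₀) (Cardinal.mk_le_of_injective einj)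
        exact absurd hle (not_le.mpr (hB P₀ hP₀))
      obtain ⟨z₀, hz₀I, hz₀B⟩ := hstep
      have hCsub : ∀ P ∈ C.erase P₀, P ∈ C := fun P hP => Finset.mem_of_mem_erase hP
      have hI' : ∀ P ∈ C.erase P₀, ¬ I * P₀ ≤ P := by
        intro P hP hle
        haveI : P.IsPrime := hCprime P (hCsub P hP)
        rcases (Ideal.IsPrime.mul_le (inferInstance : P.IsPrime)).mp hle with h | h
        · exact hI P (hCsub P hP) h
        · exact (Finset.mem_erase.mp hP).1 (hCinc P₀ hP₀ P (hCsub P hP) h).symm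
      obtain ⟨x, hxIP, hxB⟩ := ih (C.erase P₀) (Finset.erase_ssubset hP₀)
        (fun P hP => hCprime P (hCsub P hP))
        (fun P hP P' hP' => hCinc P (hCsub P hP) P' (hCsub P' hP'))
        (fun P hP => hCcard P (hCsub P hP))
        (fun P hP => hB P (hCsub P hP))
        (I * P₀) (u + z₀) hI'
      refine ⟨x, ?_, ?_⟩
      · have h1 : x - (u + z₀) ∈ I := (Ideal.mul_le_left (I := I) (J := P₀)) hxIP
        have h2 : x - u = (x - (u + z₀)) + z₀ := by ring
        rw [h2]
        exact add_mem h1 hz₀I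
      · intro P hP
        rcases eq_or_ne P P₀ with rfl | hne
        · have hmem : x - (u + z₀) ∈ P := (Ideal.mul_le_right (I := I) (J := P)) hxIP
          rw [Ideal.Quotient.eq.mpr hmem]
          exact hz₀B
        · exact hxB P (Finset.mem_erase.mpr ⟨hne, hP⟩)

end avoid

section pval
variable [IsLocalRing T] [IsAdicComplete (IsLocalRing.maximalIdeal T) T]

lemma exists_not_mem_pow (p : T) (hpm : p ∈ IsLocalRing.maximalIdeal T) (y : T) (hy : y ≠ 0) :
    ∃ N, y ∉ Ideal.span {p} ^ N := by
  by_contra h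
  push_neg at h
  apply hy
  refine IsHausdorff.haus (inferInstance : IsHausdorff (IsLocalRing.maximalIdeal T) T) y
    (fun n => ?_)
  rw [SModEq.zero, smul_top_eq]
  exact Ideal.pow_right_mono ((Ideal.span_singleton_le_iff_mem _).mpr hpm) n (h n)

lemma pfactor (p : T) (hpm : p ∈ IsLocalRing.maximalIdeal T) (y : T) (hy : y ≠ 0) :
    ∃ (M : ℕ) (y' : T), y = p ^ M * y' ∧ y' ∉ Ideal.span {p} := by
  classical
  have h := exists_not_mem_pow p hpm y hy
  set N₀ := Nat.find h with hN₀def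
  have hN₀ : y ∉ Ideal.span {p} ^ N₀ := Nat.find_spec h
  have hne0 : N₀ ≠ 0 := by
    intro h0
    rw [h0] at hN₀
    exact hN₀ (by simp)
  obtain ⟨M, hM⟩ : ∃ M, N₀ = M + 1 := Nat.exists_eq_succ_of_ne_zero hne0
  have hyM : y ∈ Ideal.span {p} ^ M := by
    have := Nat.find_min h (by omega : M < N₀)
    exact not_not.mp this
  rw [Ideal.span_singleton_pow] at hyM
  obtain ⟨y', hy'⟩ := Ideal.mem_span_singleton'.mp hyM
  refine ⟨M, y', by rw [← hy']; ring, ?_⟩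
  intro hmem
  obtain ⟨b, hb⟩ := Ideal.mem_span_singleton'.mp hmem
  apply hN₀
  rw [hM, Ideal.span_singleton_pow, Ideal.mem_span_singleton']
  exact ⟨b, by rw [← hy', ← hb]; ring⟩

lemma poly_pull (p : T) (R : Subring T) (hp : p ∈ R)
    (hpm : p ∈ IsLocalRing.maximalIdeal T)
    (hpdiv : ∀ x ∈ R, x ∈ Ideal.span {p} → ∃ r ∈ R, x = p * r) :
    ∀ f : Polynomial ↥R, f ≠ 0 → ∃ (n : ℕ) (g : Polynomial ↥R),
      f = (Polynomial.C (⟨p, hp⟩ : ↥R)) ^ n * g ∧ ∃ j, (g.coeff j : T) ∉ Ideal.span {p} := by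
  classical
  have aux : ∀ (N : ℕ) (f : Polynomial ↥R) (j₀ : ℕ), ((f.coeff j₀ : T) ∉ Ideal.span {p} ^ N) →
      ∃ (n : ℕ) (g : Polynomial ↥R),
      f = (Polynomial.C (⟨p, hp⟩ : ↥R)) ^ n * g ∧ ∃ j, (g.coeff j : T) ∉ Ideal.span {p} := by
    intro N
    induction N with
    | zero => intro f j₀ habs; exact absurd (by simp) habs
    | succ N ihN =>
      intro f j₀ hj₀
      by_cases hclass : ∃ j, (f.coeff j : T) ∉ Ideal.span {p}
      · exact ⟨0, f, by simp, hclass⟩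
      · push_neg at hclass
        have hdex : ∀ j : ℕ, ∃ r, r ∈ R ∧ (f.coeff j : T) = p * r :=
          fun j => by
            obtain ⟨r, hr, hre⟩ := hpdiv (f.coeff j : T) (f.coeff j).2 (hclass j)
            exact ⟨r, hr, hre⟩
        choose dv hdvR hdv using hdex
        set d : ℕ → ↥R := fun j => ⟨dv j, hdvR j⟩ with hd
        set g : Polynomial ↥R := ∑ j ∈ f.support, Polynomial.C (d j) * Polynomial.X ^ j with hg
        have gcoeff : ∀ j, g.coeff j = if j ∈ f.support then d j else 0 := by
          intro j
          rw [hg, Polynomial.finset_sum_coeff]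
          rw [Finset.sum_congr rfl (fun i _ => Polynomial.coeff_C_mul_X_pow (d i) i j)]
          exact Finset.sum_ite_eq f.support j d
        have hfg : f = Polynomial.C (⟨p, hp⟩ : ↥R) * g := by
          apply Polynomial.ext
          intro j
          rw [Polynomial.coeff_C_mul, gcoeff j]
          by_cases hj : j ∈ f.support
          · rw [if_pos hj]
            apply Subtype.ext
            exact hdv j
          · rw [if_neg hj]
            rw [Polynomial.notMem_support_iff.mp hj]
            simp
        have hgj₀ : (g.coeff j₀ : T) ∉ Ideal.span {p} ^ N := by
          intro hmem
          apply hj₀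
          have : (f.coeff j₀ : T) = p * (g.coeff j₀ : T) := by
            rw [hfg, Polynomial.coeff_C_mul]
            rfl
          rw [Ideal.span_singleton_pow] at hmem
          obtain ⟨b, hb⟩ := Ideal.mem_span_singleton'.mp hmem
          rw [Ideal.span_singleton_pow, Ideal.mem_span_singleton']
          exact ⟨b, by rw [this, ← hb]; ring⟩
        obtain ⟨n, g', hfact, hcl⟩ := ihN g j₀ hgj₀
        exact ⟨n + 1, g', by rw [hfg, hfact, pow_succ]; ring, hcl⟩
  intro f hf
  obtain ⟨j₀, hj₀⟩ : ∃ j, f.coeff j ≠ 0 := by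
    by_contra h
    push_neg at h
    exact hf (Polynomial.ext fun n => by simp [h n])
  have hval : (f.coeff j₀ : T) ≠ 0 := fun h => hj₀ (Subtype.ext h)
  obtain ⟨N, hN⟩ := exists_not_mem_pow p hpm (f.coeff j₀ : T) hval
  exact aux N f j₀ hN

end pval
end Statement4Aux

/-- **Lemma 7.** Coset-hitting lemma: given a `p`ca subring `R` with `pT ∩ R = pR` and an
ideal `J ⊄ Qᵢ`, there is an infinite `p`ca subring `S ⊇ R` with `Γ(S) = Γ(R)` hitting the
coset `u + J`, with `S ∩ J ⊄ Qᵢ` when `u ∈ J`, and with `pT ∩ S = pS`. -/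
theorem statement4
    {T : Type u} [CommRing T] [IsLocalRing T] [IsNoetherianRing T]
    [IsAdicComplete (IsLocalRing.maximalIdeal T) T]
    {k : ℕ} (hk : 0 < k) (Q : Fin k → Ideal T)
    (hQprime : ∀ i, (Q i).IsPrime)
    (hQnonmax : ∀ i, Q i ≠ IsLocalRing.maximalIdeal T)
    (hQinc : ∀ i j, Q i ≤ Q j → Q i = Q j)
    (p : T) (hp0 : p ≠ 0) (hpreg : p ∈ nonZeroDivisors T) (hpQ : ∀ i, p ∈ Q i)
    (hdim : 1 ≤ ringKrullDim T)
    (hAss : ∀ P ∈ associatedPrimes T (T ⧸ Ideal.span {p}), ∀ x ∈ P, ∃ i, x ∈ Q i)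
    (R : Subring T) (hR : IsPcaSubring Q p R)
    (hpR : ∀ x ∈ R, x ∈ Ideal.span {p} ↔ ∃ r ∈ R, x = p * r)
    (J : Ideal T) (hJ : ∀ i, ¬ J ≤ Q i) (u : T) :
    ∃ S : Subring T, IsPcaSubring Q p S ∧ (S : Set T).Infinite ∧
      R ≤ S ∧ Gamma ↥S = Gamma ↥R ∧
      (∃ s ∈ S, Ideal.Quotient.mk J s = Ideal.Quotient.mk J u) ∧
      (u ∈ J → ∀ i, ¬ ((J : Set T) ∩ (S : Set T) ⊆ (Q i : Set T))) ∧
      (∀ x ∈ S, x ∈ Ideal.span {p} ↔ ∃ s ∈ S, x = p * s) := by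
  classical
  obtain ⟨hpmem, hqlR, hcardR, hassR, hcaR⟩ := hR
  set mI := IsLocalRing.maximalIdeal T with hmIdef
  set i₀ : Fin k := ⟨0, hk⟩ with hi₀
  have hQne : ∀ i, (Q i) ≠ ⊤ := fun i => (hQprime i).ne_top
  have hQm : ∀ i, Q i ≤ mI := fun i => IsLocalRing.le_maximalIdeal (hQne i)
  have hpm : p ∈ mI := hQm i₀ (hpQ i₀)
  have hmprime : mI.IsPrime := (IsLocalRing.maximalIdeal.isMaximal T).isPrime
  have hmne : mI ≠ ⊤ := (IsLocalRing.maximalIdeal.isMaximal T).ne_top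
  have hone_m : (1 : T) ∉ mI := fun h1 => hmne ((Ideal.eq_top_iff_one _).mpr h1)
  have hone_p : (1 : T) ∉ Ideal.span {p} := by
    intro h1
    exact hone_m (((Ideal.span_singleton_le_iff_mem _).mpr hpm) h1)
  have hunit_of_not_mem : ∀ t : T, t ∉ mI → IsUnit t := by
    intro t ht
    by_contra hu
    exact ht (IsLocalRing.mem_maximalIdeal t |>.mpr (mem_nonunits_iff.mpr hu))
  -- R ∩ Q i ⊆ pT
  have hRQ : ∀ (i : Fin k), ∀ r : T, r ∈ R → r ∈ Q i → r ∈ Ideal.span {p} := by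
    intro i r hrR hrQ
    by_contra hrp
    have hmem : r ∈ CompAvoid (Q i) p (R : Set T) := ⟨r, hrQ, hrp, 1, R.one_mem, (mul_one r).symm⟩
    have h0 := hcaR i r hmem hrR
    rw [h0] at hrp
    exact hrp (Ideal.zero_mem _)
  -- zero-divisor lemma
  have hzd : ∀ z w : T, z * w ∈ Ideal.span {p} → w ∉ Ideal.span {p} → ∃ i, z ∈ Q i := by
    intro z w hzw hw
    have hwbar : (Ideal.Quotient.mk (Ideal.span {p}) w) ≠ 0 := by
      rwa [Ne, Ideal.Quotient.eq_zero_iff_mem]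
    obtain ⟨P, hPassoc, hPle⟩ := exists_le_isAssociatedPrime_of_isNoetherianRing T
      (Ideal.Quotient.mk (Ideal.span {p}) w) hwbar
    have hzP : z ∈ P := by
      apply hPle
      rw [Submodule.mem_colon_singleton, Submodule.mem_bot]
      show z • Ideal.Quotient.mk (Ideal.span {p}) w = 0
      have hsmul : z • Ideal.Quotient.mk (Ideal.span {p}) w
          = Ideal.Quotient.mk (Ideal.span {p}) (z * w) := rfl
      rw [hsmul, Ideal.Quotient.eq_zero_iff_mem]
      exact hzw
    exact hAss P hPassoc z hzP
  -- associated primes of T sit inside the Q i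
  have hassQ : ∀ P ∈ associatedPrimes T T, ∀ z ∈ P, ∃ i, z ∈ Q i := by
    intro P hPass z hzP
    obtain ⟨hPprime, y, hy⟩ := isAssociatedPrime_iff.mp hPass
    have hyne : y ≠ 0 := by
      intro h0
      rw [h0] at hy
      apply hPprime.ne_top
      rw [hy]; exact eq_top_iff.mpr fun r _ => Submodule.mem_colon_singleton.mpr (by simp)
    obtain ⟨M, y', hyfac, hy'p⟩ := Statement4Aux.pfactor p hpm y hyne
    have hzy : z * y = 0 := by
      rw [hy] at hzP
      rw [Submodule.mem_colon_singleton] at hzP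
      simpa [smul_eq_mul] using hzP
    have hzy'0 : z * y' = 0 := by
      have hpM : (p ^ M) ∈ nonZeroDivisors T := pow_mem hpreg M
      have h1 : (z * y') * p ^ M = 0 := by
        rw [hyfac] at hzy
        linear_combination hzy
      exact (mem_nonZeroDivisors_iff_right.mp hpM (z * y')) h1
    have hzy' : z * y' ∈ Ideal.span {p} := by
      rw [hzy'0]; exact Ideal.zero_mem _
    exact hzd z y' hzy' hy'p
  -- cardinal facts
  have hGRa : Cardinal.aleph0.{u} ≤ Gamma ↥R := le_max_right _ _
  have hmkT : Cardinal.aleph0.{u} < Cardinal.mk T := lt_of_le_of_lt hGRa hcardR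
  -- the coefficient ring hom
  set φ : ↥R →+* T := R.subtype with hφ
  -- the family of bad sets
  set B : (P : Ideal T) → Set (T ⧸ P) := fun P =>
    ⋃ f : {f : Polynomial ↥R // f.map ((Ideal.Quotient.mk P).comp φ) ≠ 0},
      {c : T ⧸ P | (f.1.map ((Ideal.Quotient.mk P).comp φ)).IsRoot c} with hBdef
  have hPolyCard : Cardinal.mk (Polynomial ↥R) ≤ Gamma ↥R := Polynomial.cardinalMk_le_max
  have hBcard : ∀ P : Ideal T, P.IsPrime → Cardinal.mk (B P) < Cardinal.mk T := by
    intro P hP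
    haveI := hP
    have h1 : Cardinal.mk (B P)
        ≤ Cardinal.mk {f : Polynomial ↥R // f.map ((Ideal.Quotient.mk P).comp φ) ≠ 0}
          * ⨆ f : {f : Polynomial ↥R // f.map ((Ideal.Quotient.mk P).comp φ) ≠ 0},
            Cardinal.mk {c : T ⧸ P | (f.1.map ((Ideal.Quotient.mk P).comp φ)).IsRoot c} :=
      Cardinal.mk_iUnion_le _
    have h2 : ∀ f : {f : Polynomial ↥R // f.map ((Ideal.Quotient.mk P).comp φ) ≠ 0},
        Cardinal.mk {c : T ⧸ P | (f.1.map ((Ideal.Quotient.mk P).comp φ)).IsRoot c}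
          ≤ Cardinal.aleph0.{u} := by
      intro f
      exact le_of_lt (lt_of_lt_of_le (Polynomial.finite_setOf_isRoot f.2).lt_aleph0 le_rfl)
    have h3 : Cardinal.mk (B P) ≤ Cardinal.mk (Polynomial ↥R) * Cardinal.aleph0.{u} := by
      refine le_trans h1 (mul_le_mul' (Cardinal.mk_subtype_le _) (ciSup_le' h2))
    have h4 : Cardinal.mk (Polynomial ↥R) * Cardinal.aleph0.{u} ≤ Gamma ↥R := by
      calc Cardinal.mk (Polynomial ↥R) * Cardinal.aleph0.{u}
          ≤ Gamma ↥R * Cardinal.aleph0.{u} := mul_le_mul' hPolyCard le_rfl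
        _ = Gamma ↥R := by
            rw [Cardinal.mul_eq_max hGRa le_rfl]
            exact max_eq_left hGRa
    exact lt_of_le_of_lt (le_trans h3 h4) hcardR
  -- the finite set of primes
  set Cs : Finset (Ideal T) := Finset.image Q Finset.univ with hCs
  have hmemCs : ∀ i, Q i ∈ Cs := fun i => Finset.mem_image_of_mem Q (Finset.mem_univ i)
  obtain ⟨x, hxu, hxB⟩ := Statement4Aux.exists_avoid B Cs
    (by
      intro P hP
      obtain ⟨i, _, rfl⟩ := Finset.mem_image.mp hP
      exact hQprime i)
    (by
      intro P hP P' hP' hle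
      obtain ⟨i, _, rfl⟩ := Finset.mem_image.mp hP
      obtain ⟨j, _, rfl⟩ := Finset.mem_image.mp hP'
      exact hQinc i j hle)
    (by
      intro P hP
      obtain ⟨i, _, rfl⟩ := Finset.mem_image.mp hP
      exact Statement4Aux.card_quot_eq _ (hQprime i) (hQnonmax i))
    (by
      intro P hP
      obtain ⟨i, _, rfl⟩ := Finset.mem_image.mp hP
      exact hBcard _ (hQprime i))
    J u
    (by
      intro P hP
      obtain ⟨i, _, rfl⟩ := Finset.mem_image.mp hP
      exact hJ i)
  -- key avoidance property of x
  have hx2 : ∀ (i : Fin k) (f : Polynomial ↥R), (∃ n, (f.coeff n : T) ∉ Ideal.span {p}) →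
      Polynomial.eval₂ φ x f ∉ Q i := by
    rintro i f ⟨n, hn⟩ hmem
    have hmap : f.map ((Ideal.Quotient.mk (Q i)).comp φ) ≠ 0 := by
      intro h0
      have hcf := congrArg (fun g => Polynomial.coeff g n) h0
      simp only [Polynomial.coeff_map, Polynomial.coeff_zero] at hcf
      have : (f.coeff n : T) ∈ Q i := Ideal.Quotient.eq_zero_iff_mem.mp hcf
      exact hn (hRQ i _ (f.coeff n).2 this)
    have hroot : (f.map ((Ideal.Quotient.mk (Q i)).comp φ)).IsRoot (Ideal.Quotient.mk (Q i) x) := by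
      rw [Polynomial.IsRoot, Polynomial.eval_map, ← Polynomial.hom_eval₂]
      exact Ideal.Quotient.eq_zero_iff_mem.mpr hmem
    exact hxB (Q i) (hmemCs i) (Set.mem_iUnion.mpr ⟨⟨f, hmap⟩, hroot⟩)
  have hx2p : ∀ f : Polynomial ↥R, (∃ n, (f.coeff n : T) ∉ Ideal.span {p}) →
      Polynomial.eval₂ φ x f ∉ Ideal.span {p} := by
    intro f hf hmem
    exact hx2 i₀ f hf (((Ideal.span_singleton_le_iff_mem _).mpr (hpQ i₀)) hmem)
  have hx2ne : ∀ f : Polynomial ↥R, (∃ n, (f.coeff n : T) ∉ Ideal.span {p}) →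
      Polynomial.eval₂ φ x f ≠ 0 := by
    intro f hf h0
    exact hx2p f hf (h0 ▸ Ideal.zero_mem _)
  -- decomposition of evaluations
  have hdecomp : ∀ f : Polynomial ↥R, f ≠ 0 → ∃ (n : ℕ) (g : Polynomial ↥R),
      Polynomial.eval₂ φ x f = p ^ n * Polynomial.eval₂ φ x g
      ∧ (∃ j, (g.coeff j : T) ∉ Ideal.span {p}) := by
    intro f hf
    obtain ⟨n, g, hfact, hcl⟩ := Statement4Aux.poly_pull p R hpmem hpm
      (fun z hz hzp => (hpR z hz).mp hzp) f hf
    refine ⟨n, g, ?_, hcl⟩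
    rw [hfact, Polynomial.eval₂_mul, Polynomial.eval₂_pow, Polynomial.eval₂_C]
    rfl
  -- main cancellation lemma
  have hCA : ∀ (i : Fin k) (q : T), q ∈ Q i → q ∉ Ideal.span {p} →
      ∀ F H : Polynomial ↥R, q * Polynomial.eval₂ φ x F = Polynomial.eval₂ φ x H →
      Polynomial.eval₂ φ x H = 0 := by
    intro i q hqQ hqp F H heq
    by_contra hH0
    have hHne : H ≠ 0 := by
      intro h0; rw [h0] at hH0; exact hH0 (Polynomial.eval₂_zero _ _)
    have hFe : Polynomial.eval₂ φ x F ≠ 0 := by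
      intro h0; rw [h0, mul_zero] at heq; exact hH0 heq.symm
    have hFne : F ≠ 0 := by
      intro h0; rw [h0] at hFe; exact hFe (Polynomial.eval₂_zero _ _)
    obtain ⟨m, Ht, hHfact, hHcl⟩ := hdecomp H hHne
    obtain ⟨l, Ft, hFfact, hFcl⟩ := hdecomp F hFne
    rcases le_or_gt m l with hml | hlm
    · -- l ≥ m : cancel p^m, contradiction with eval Ht ∉ Q i
      have hpMreg := pow_mem hpreg m
      have hcalc : (q * (p ^ (l - m) * Polynomial.eval₂ φ x Ft) - Polynomial.eval₂ φ x Ht)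
          * p ^ m = 0 := by
        have hl : l = m + (l - m) := by omega
        rw [hFfact, hHfact] at heq
        rw [hl] at heq
        linear_combination heq
      have hcancel : q * (p ^ (l - m) * Polynomial.eval₂ φ x Ft)
          - Polynomial.eval₂ φ x Ht = 0 :=
        (mem_nonZeroDivisors_iff_right.mp hpMreg _) hcalc
      have : Polynomial.eval₂ φ x Ht ∈ Q i := by
        have : Polynomial.eval₂ φ x Ht = q * (p ^ (l - m) * Polynomial.eval₂ φ x Ft) := by
          linear_combination -hcancel
        rw [this]
        exact Ideal.mul_mem_right _ _ hqQ
      exact hx2 i Ht hHcl this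
    · -- m > l : cancel p^l, then q * eval Ft ∈ pT, contradiction
      have hpLreg := pow_mem hpreg l
      have hcalc : (q * Polynomial.eval₂ φ x Ft - p ^ (m - l) * Polynomial.eval₂ φ x Ht)
          * p ^ l = 0 := by
        have hm : m = l + (m - l) := by omega
        rw [hFfact, hHfact] at heq
        rw [hm] at heq
        linear_combination heq
      have hcancel : q * Polynomial.eval₂ φ x Ft
          - p ^ (m - l) * Polynomial.eval₂ φ x Ht = 0 :=
        (mem_nonZeroDivisors_iff_right.mp hpLreg _) hcalc
      have hqFt : Polynomial.eval₂ φ x Ft * q ∈ Ideal.span {p} := by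
        have hml1 : ∃ m', m - l = m' + 1 := ⟨m - l - 1, by omega⟩
        obtain ⟨m', hm'⟩ := hml1
        have : Polynomial.eval₂ φ x Ft * q
            = p * (p ^ m' * Polynomial.eval₂ φ x Ht) := by
          have h1 : q * Polynomial.eval₂ φ x Ft
              = p ^ (m - l) * Polynomial.eval₂ φ x Ht := by linear_combination hcancel
          rw [hm'] at h1
          rw [mul_comm]
          rw [h1, pow_succ]
          ring
        rw [this]
        exact Ideal.mul_mem_right _ _ (Ideal.mem_span_singleton_self p)
      obtain ⟨j, hj⟩ := hzd (Polynomial.eval₂ φ x Ft) q hqFt hqp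
      exact hx2 j Ft hFcl hj
  -- p-divisibility lemma for evaluations
  have hPS : ∀ F : Polynomial ↥R, Polynomial.eval₂ φ x F ∈ Ideal.span {p} →
      ∃ G : Polynomial ↥R, Polynomial.eval₂ φ x F = p * Polynomial.eval₂ φ x G := by
    intro F hF
    by_cases hF0 : F = 0
    · exact ⟨0, by rw [hF0]; simp⟩
    · obtain ⟨m, Ft, hfact, hcl⟩ := hdecomp F hF0
      have hm0 : m ≠ 0 := by
        intro h0
        rw [h0, pow_zero, one_mul] at hfact
        exact hx2p Ft hcl (hfact ▸ hF)
      obtain ⟨m', rfl⟩ : ∃ m', m = m' + 1 := ⟨m - 1, by omega⟩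
      refine ⟨(Polynomial.C (⟨p, hpmem⟩ : ↥R)) ^ m' * Ft, ?_⟩
      rw [Polynomial.eval₂_mul, Polynomial.eval₂_pow, Polynomial.eval₂_C, hfact, pow_succ]
      have : φ (⟨p, hpmem⟩ : ↥R) = p := rfl
      rw [this]
      ring
  -- the subring S
  set ev : Polynomial ↥R → T := fun f => Polynomial.eval₂ φ x f with hev
  have hevmul : ∀ f g, ev (f * g) = ev f * ev g := fun f g => Polynomial.eval₂_mul _ _
  have hevone : ev 1 = 1 := Polynomial.eval₂_one _ _
  set S : Subring T :=
    { carrier := {t : T | ∃ F G : Polynomial ↥R, ev G ∉ mI ∧ t * ev G = ev F}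
      one_mem' := ⟨1, 1, by rw [hevone]; exact hone_m, by rw [hevone, one_mul]⟩
      mul_mem' := by
        rintro a b ⟨F₁, G₁, hG₁, h₁⟩ ⟨F₂, G₂, hG₂, h₂⟩
        refine ⟨F₁ * F₂, G₁ * G₂, ?_, ?_⟩
        · rw [hevmul]
          intro hm
          rcases hmprime.mem_or_mem hm with h | h
          exacts [hG₁ h, hG₂ h]
        · rw [hevmul, hevmul]
          calc (a * b) * (ev G₁ * ev G₂) = (a * ev G₁) * (b * ev G₂) := by ring
            _ = ev F₁ * ev F₂ := by rw [h₁, h₂]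
      zero_mem' := ⟨0, 1, by rw [hevone]; exact hone_m, by
        rw [hevone, zero_mul]; simp only [hev]
        exact (Polynomial.eval₂_zero _ _).symm⟩
      add_mem' := by
        rintro a b ⟨F₁, G₁, hG₁, h₁⟩ ⟨F₂, G₂, hG₂, h₂⟩
        refine ⟨F₁ * G₂ + F₂ * G₁, G₁ * G₂, ?_, ?_⟩
        · rw [hevmul]
          intro hm
          rcases hmprime.mem_or_mem hm with h | h
          exacts [hG₁ h, hG₂ h]
        · have hevadd : ev (F₁ * G₂ + F₂ * G₁) = ev F₁ * ev G₂ + ev F₂ * ev G₁ := by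
            simp only [hev]
            rw [Polynomial.eval₂_add, Polynomial.eval₂_mul, Polynomial.eval₂_mul]
          rw [hevmul, hevadd]
          calc (a + b) * (ev G₁ * ev G₂)
              = (a * ev G₁) * ev G₂ + (b * ev G₂) * ev G₁ := by ring
            _ = ev F₁ * ev G₂ + ev F₂ * ev G₁ := by rw [h₁, h₂]
      neg_mem' := by
        rintro a ⟨F, G, hG, h⟩
        refine ⟨-F, G, hG, ?_⟩
        have : ev (-F) = -(ev F) := by simp only [hev]; exact Polynomial.eval₂_neg _
        rw [this, ← h]
        ring } with hSdef
  have hmemS : ∀ t : T, t ∈ S ↔ ∃ F G : Polynomial ↥R, ev G ∉ mI ∧ t * ev G = ev F :=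
    fun t => Iff.rfl
  have hRS : R ≤ S := by
    intro r hr
    refine (hmemS r).mpr ⟨Polynomial.C ⟨r, hr⟩, 1, by rw [hevone]; exact hone_m, ?_⟩
    rw [hevone, mul_one]; simp only [hev]
    rw [Polynomial.eval₂_C]
    rfl
  have hxS : x ∈ S := by
    refine (hmemS x).mpr ⟨Polynomial.X, 1, by rw [hevone]; exact hone_m, ?_⟩
    rw [hevone, mul_one]; simp only [hev]
    rw [Polynomial.eval₂_X]
  have hpinS : p ∈ S := hRS hpmem
  -- quasilocal
  have hql : QuasilocalWithMaxIdeal S := by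
    rintro ⟨s, hsS⟩ hsm
    obtain ⟨F, G, hG, hs⟩ := (hmemS s).mp hsS
    have hsm' : s ∉ mI := hsm
    have hF : ev F ∉ mI := by
      intro hFm
      rw [← hs] at hFm
      rcases hmprime.mem_or_mem hFm with h | h
      exacts [hsm' h, hG h]
    obtain ⟨v, hv⟩ := (hunit_of_not_mem _ hF).exists_right_inv
    have htS : (ev G * v) ∈ S := by
      refine (hmemS _).mpr ⟨G, F, hF, ?_⟩
      calc (ev G * v) * ev F = ev G * (ev F * v) := by ring
        _ = ev G := by rw [hv, mul_one]
    refine isUnit_iff_exists_inv.mpr ⟨⟨ev G * v, htS⟩, ?_⟩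
    apply Subtype.ext
    rw [Subring.coe_mul, Subring.coe_one]
    show s * (ev G * v) = 1
    calc s * (ev G * v) = (s * ev G) * v := by ring
      _ = ev F * v := by rw [hs]
      _ = 1 := hv
  -- cardinality
  have hrep : ∀ s : ↥S, ∃ FG : Polynomial ↥R × Polynomial ↥R,
      ev FG.2 ∉ mI ∧ (s : T) * ev FG.2 = ev FG.1 := by
    rintro ⟨s, hsS⟩
    obtain ⟨F, G, hG, hs⟩ := (hmemS s).mp hsS
    exact ⟨(F, G), hG, hs⟩
  choose rep hrep1 hrep2 using hrep
  have hrepinj : Function.Injective rep := by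
    intro s₁ s₂ h
    have h1 := hrep2 s₁
    have h2 := hrep2 s₂
    rw [h] at h1
    apply Subtype.ext
    have hu := hunit_of_not_mem _ (hrep1 s₂)
    have heq : (s₁ : T) * ev (rep s₂).2 = (s₂ : T) * ev (rep s₂).2 := by rw [h1, h2]
    exact hu.mul_right_cancel heq
  have hmkS : Cardinal.mk ↥S ≤ Gamma ↥R := by
    calc Cardinal.mk ↥S ≤ Cardinal.mk (Polynomial ↥R × Polynomial ↥R) :=
          Cardinal.mk_le_of_injective hrepinj
      _ = Cardinal.mk (Polynomial ↥R) * Cardinal.mk (Polynomial ↥R) := by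
          simp [Cardinal.mk_prod]
      _ ≤ Gamma ↥R * Gamma ↥R := mul_le_mul' hPolyCard hPolyCard
      _ = Gamma ↥R := Cardinal.mul_eq_self hGRa
  have hmkRS : Cardinal.mk ↥R ≤ Cardinal.mk ↥S :=
    Cardinal.mk_le_of_injective (f := fun r : ↥R => (⟨r.1, hRS r.2⟩ : ↥S))
      (fun r₁ r₂ h => by
        apply Subtype.ext
        have : ((⟨r₁.1, hRS r₁.2⟩ : ↥S) : T) = ((⟨r₂.1, hRS r₂.2⟩ : ↥S) : T) :=
          congrArg Subtype.val h
        exact this)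
  have hGammaS : Gamma ↥S = Gamma ↥R := by
    refine le_antisymm (max_le hmkS hGRa) (max_le (le_trans hmkRS (le_max_left _ _))
      (le_max_right _ _))
  have hcardS : Gamma ↥S < Cardinal.mk T := hGammaS ▸ hcardR
  -- associated primes of T meet S trivially
  have hassS : ∀ P ∈ associatedPrimes T T, ∀ z ∈ S, z ∈ P → z = 0 := by
    intro P hP z hzS hzP
    obtain ⟨F, G, hG, hz⟩ := (hmemS z).mp hzS
    have hFP : ev F ∈ P := by
      rw [← hz]
      exact Ideal.mul_mem_right _ _ hzP
    have hF0 : ev F = 0 := by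
      by_contra hF0
      have hFne : F ≠ 0 := by
        intro hcon
        rw [hcon] at hF0; simp only [hev] at hF0
        exact hF0 (Polynomial.eval₂_zero _ _)
      obtain ⟨m, Ft, hfact, hcl⟩ := hdecomp F hFne
      haveI : P.IsPrime := hP.isPrime
      have hpP : p ∉ P := by
        intro hpP
        obtain ⟨hprime, y, hy⟩ := isAssociatedPrime_iff.mp hP
        have hyne : y ≠ 0 := by
          intro h0
          rw [h0] at hy
          apply hprime.ne_top
          rw [hy]; exact eq_top_iff.mpr fun r _ => Submodule.mem_colon_singleton.mpr (by simp)
        apply hyne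
        have : p * y = 0 := by
          rw [hy] at hpP
          rw [Submodule.mem_colon_singleton] at hpP
          simpa [smul_eq_mul] using hpP
        exact (mem_nonZeroDivisors_iff_right.mp hpreg y) (by linear_combination this)
      have hFtP : ev Ft ∉ P := by
        intro hFtP
        obtain ⟨j, hj⟩ := hassQ P hP (ev Ft) hFtP
        exact hx2 j Ft hcl hj
      have hmm : p ^ m * ev Ft ∈ P := by
        simp only [hev] at hFP ⊢
        rw [← hfact]
        exact hFP
      rcases (inferInstance : P.IsPrime).mem_or_mem hmm with h | h
      · exact hpP ((inferInstance : P.IsPrime).mem_of_pow_mem _ h)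
      · exact hFtP h
    rw [hF0] at hz
    have hu := hunit_of_not_mem _ hG
    exact (IsUnit.mul_left_eq_zero hu).mp hz
  -- complement-avoidance for S
  have hcaS : ∀ i : Fin k, ∀ t ∈ CompAvoid (Q i) p (S : Set T), t ∈ S → t = 0 := by
    rintro i t ⟨q, hqQ, hqp, r, hrS, rfl⟩ htS
    obtain ⟨F, G, hG, hr⟩ := (hmemS r).mp hrS
    obtain ⟨F', G', hG', ht⟩ := (hmemS _).mp htS
    have key : q * ev (F * G') = ev (F' * G) := by
      rw [hevmul, hevmul]
      calc q * (ev F * ev G') = (q * (ev F)) * ev G' := by ring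
        _ = (q * (r * ev G)) * ev G' := by rw [hr]
        _ = ((q * r) * ev G') * ev G := by ring
        _ = ev F' * ev G := by rw [ht]
    have h0 : ev (F' * G) = 0 := hCA i q hqQ hqp (F * G') (F' * G) (by
      simp only [hev] at key ⊢
      exact key)
    rw [hevmul] at h0
    have hz : (q * r) * (ev G' * ev G) = 0 := by
      calc (q * r) * (ev G' * ev G) = ((q * r) * ev G') * ev G := by ring
        _ = ev F' * ev G := by rw [ht]
        _ = 0 := h0
    have hu := (hunit_of_not_mem _ hG').mul (hunit_of_not_mem _ hG)
    exact (IsUnit.mul_left_eq_zero hu).mp hz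
  -- p-divisibility in S
  have hpS : ∀ z ∈ S, z ∈ Ideal.span {p} ↔ ∃ s ∈ S, z = p * s := by
    intro z hzS
    constructor
    · intro hzp
      obtain ⟨F, G, hG, hz⟩ := (hmemS z).mp hzS
      have hFp : ev F ∈ Ideal.span {p} := by
        rw [← hz]
        exact Ideal.mul_mem_right _ _ hzp
      obtain ⟨G₂, hG₂⟩ := hPS F (by simp only [hev] at hFp; exact hFp)
      obtain ⟨v, hv⟩ := (hunit_of_not_mem _ hG).exists_right_inv
      have hsS : (ev G₂ * v) ∈ S := by
        refine (hmemS _).mpr ⟨G₂, G, hG, ?_⟩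
        calc (ev G₂ * v) * ev G = ev G₂ * (ev G * v) := by ring
          _ = ev G₂ := by rw [hv, mul_one]
      refine ⟨ev G₂ * v, hsS, ?_⟩
      have hkey : z * ev G = p * ev G₂ := by
        rw [hz]; simp only [hev]
        exact hG₂
      calc z = z * (ev G * v) := by rw [hv, mul_one]
        _ = (z * ev G) * v := by ring
        _ = (p * ev G₂) * v := by rw [hkey]
        _ = p * (ev G₂ * v) := by ring
    · rintro ⟨s, _, rfl⟩
      exact Ideal.mem_span_singleton'.mpr ⟨s, mul_comm s p⟩
  -- S is infinite
  have hpnu : ¬ IsUnit p := by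
    intro hu
    exact hmne (Ideal.eq_top_of_isUnit_mem mI hpm hu)
  have hppow : ∀ a b : ℕ, a < b → p ^ a ≠ p ^ b := by
    intro a b hab hcon
    have h1 : p ^ a * 1 = p ^ a * p ^ (b - a) := by
      rw [mul_one, ← pow_add]
      rw [hcon]
      congr 1
      omega
    have h2 : (1 : T) = p ^ (b - a) := by
      have hreg := pow_mem hpreg a
      have : (1 - p ^ (b - a)) * p ^ a = 0 := by linear_combination h1
      have h3 := (mem_nonZeroDivisors_iff_right.mp hreg _) this
      linear_combination h3
    obtain ⟨c, hc⟩ : ∃ c, b - a = c + 1 := ⟨b - a - 1, by omega⟩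
    apply hpnu
    exact isUnit_iff_exists_inv.mpr ⟨p ^ c, by rw [← pow_succ', ← hc, ← h2]⟩
  have hSinf : (S : Set T).Infinite := by
    apply Set.infinite_of_injective_forall_mem (f := fun n : ℕ => p ^ n)
    · intro a b hab
      by_contra hne
      rcases lt_or_gt_of_ne hne with h | h
      exacts [hppow a b h hab, hppow b a h hab.symm]
    · intro n
      exact pow_mem hpinS n
  -- conclusion
  refine ⟨S, ⟨hpinS, hql, hcardS, hassS, hcaS⟩, hSinf, hRS, hGammaS, ?_, ?_, hpS⟩
  · exact ⟨x, hxS, Ideal.Quotient.eq.mpr hxu⟩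
  · intro huJ i hsub
    have hxQ : x ∉ Q i := by
      have := hx2 i Polynomial.X ⟨1, by rw [Polynomial.coeff_X_one]; exact hone_p⟩
      rwa [Polynomial.eval₂_X] at this
    have hxJ : x ∈ J := by
      have := J.add_mem hxu huJ
      rwa [sub_add_cancel] at this
    exact hxQ (hsub ⟨hxJ, hxS⟩)
end

section
/- Let Π denote the prime subring of T. Suppose A ⊆ T is a local (Noetherian quasilocal) domain with p ∈ A such that the inclusion A ⊆ T induces an isomorphism of the (A ∩ 𝔪)-adic completion of A with T, pA is a prime ideal of A, Qᵢ ∩ A = pA for every i, and every prime ideal Q of T with Q ∩ A = pA satisfies Q ⊆ Qᵢ for some i ∈ {1, …, k}. Then P ∩ Π[p] = (0) for every associated prime P of T. -/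
universe u

lemma aux_reg {R : Type*} [CommRing R] [IsNoetherianRing R] (I : Ideal R) {r : R}
    (hreg : IsSMulRegular R r) : IsSMulRegular (AdicCompletion I R) r := by
  have h1 : IsSMulRegular (TensorProduct R (AdicCompletion I R) R) r := hreg.lTensor _
  exact ((TensorProduct.rid R (AdicCompletion I R)).isSMulRegular_congr r).mp h1

/-- **Theorem 11, necessity (a).** If `Â = T` and `pA` is prime with semilocal formal
fiber having maximal ideals the elements of `C`, then `P ∩ Π[p] = (0)` for every
associated prime `P` of `T`. -/
theorem statement9
    {T : Type u} [CommRing T] [IsLocalRing T] [IsNoetherianRing T]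
    [IsAdicComplete (IsLocalRing.maximalIdeal T) T]
    {k : ℕ} (hk : 0 < k) (Q : Fin k → Ideal T)
    (hQprime : ∀ i, (Q i).IsPrime)
    (hQnonmax : ∀ i, Q i ≠ IsLocalRing.maximalIdeal T)
    (hQinc : ∀ i j, Q i ≤ Q j → Q i = Q j)
    (p : T) (hp0 : p ≠ 0) (hpQ : ∀ i, p ∈ Q i)
    (A : Subring T) (hpA : p ∈ A)
    (hANoeth : IsNoetherianRing ↥A) (hAdom : IsDomain ↥A)
    (hAql : QuasilocalWithMaxIdeal A)
    (φ : AdicCompletion ((IsLocalRing.maximalIdeal T).comap A.subtype) ↥A ≃+* T)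
    (hφ : ∀ a : ↥A,
      φ (algebraMap ↥A (AdicCompletion ((IsLocalRing.maximalIdeal T).comap A.subtype) ↥A) a)
        = (a : T))
    (hpAprime : (Ideal.span {(⟨p, hpA⟩ : ↥A)}).IsPrime)
    (hQA : ∀ i, (Q i).comap A.subtype = Ideal.span {(⟨p, hpA⟩ : ↥A)})
    (hfiber : ∀ Q' : Ideal T, Q'.IsPrime →
      Q'.comap A.subtype = Ideal.span {(⟨p, hpA⟩ : ↥A)} → ∃ i, Q' ≤ Q i)
    :
    (∀ P ∈ associatedPrimes T T, ∀ x ∈ Subring.closure ({p} : Set T), x ∈ P → x = 0) := by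
  intro P hP x hxcl hxP
  -- `x` lies in `A` since the closure of `{p}` is contained in `A`
  have hxA : x ∈ A := by
    have : Subring.closure ({p} : Set T) ≤ A := by
      rw [Subring.closure_le]
      simpa using hpA
    exact this hxcl
  -- nonzero elements of `A` are nonzerodivisors on `T`
  have key : ∀ a : ↥A, a ≠ 0 → ∀ t : T, (a : T) * t = 0 → t = 0 := by
    intro a ha t hat
    haveI : IsNoetherianRing ↥A := hANoeth
    have hreg : IsSMulRegular (↥A) a := fun y z h => by
      exact mul_left_cancel₀ ha h
    have hregC : IsSMulRegular (AdicCompletion ((IsLocalRing.maximalIdeal T).comap A.subtype) ↥A) a := aux_reg ((IsLocalRing.maximalIdeal T).comap A.subtype) hreg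
    have hc : (algebraMap ↥A (AdicCompletion ((IsLocalRing.maximalIdeal T).comap A.subtype) ↥A) a) * (φ.symm t) = 0 := by
      apply φ.injective
      rw [map_mul, map_zero, RingEquiv.apply_symm_apply, hφ]
      exact hat
    have : a • (φ.symm t) = 0 := by
      rw [Algebra.smul_def]; exact hc
    have h0 : φ.symm t = 0 := hregC (show a • φ.symm t = a • 0 by rw [this, smul_zero])
    have := congrArg φ h0
    simpa using this
  -- `P` is the annihilator of a nonzero element `t`
  obtain ⟨hPprime, t, ht⟩ := hP
  have ht0 : t ≠ 0 := by
    rintro rfl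
    apply hPprime.ne_top
    rw [ht]
    ext y
    simp only [Submodule.mem_annihilator, Submodule.mem_top, iff_true]
    exact Ideal.le_radical (Submodule.mem_colon_singleton.mpr (by simp))
  have hxt : ∃ n : ℕ, x ^ n * t = 0 := by
    rw [ht] at hxP
    obtain ⟨n, hn⟩ := hxP
    refine ⟨n, ?_⟩
    have := Submodule.mem_colon_singleton.mp hn
    simpa using this
  by_contra hx0
  obtain ⟨n, hn⟩ := hxt
  exact ht0 (key (⟨x, hxA⟩ ^ n) (pow_ne_zero _ (by simpa [Subtype.ext_iff] using hx0)) t (by simpa using hn))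
end

section
/- Suppose A ⊆ T is a local (Noetherian quasilocal) domain with p ∈ A such that the inclusion A ⊆ T induces an isomorphism of the (A ∩ 𝔪)-adic completion of A with T, pA is a prime ideal of A, Qᵢ ∩ A = pA for every i, and every prime ideal Q of T with Q ∩ A = pA satisfies Q ⊆ Qᵢ for some i ∈ {1, …, k}. Then every associated prime P' of the T-module T/pT satisfies P' ⊆ Qᵢ for some i ∈ {1, …, k}. -/
universe u

lemma flat_torsion {T : Type u} [CommRing T] (A : Subring T) [Module.Flat ↥A T]
    (p : T) (hpA : p ∈ A) (hpAprime : (Ideal.span {(⟨p, hpA⟩ : ↥A)}).IsPrime)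
    (a : ↥A) (ha : a ∉ Ideal.span {(⟨p, hpA⟩ : ↥A)})
    (x : T) (hx : (a : T) * x ∈ Ideal.span {p}) : x ∈ Ideal.span {p} := by
  rw [Ideal.mem_span_singleton] at hx
  obtain ⟨y, hy⟩ := hx
  set pA : ↥A := ⟨p, hpA⟩ with hpAdef
  have hrel : ∑ i : ULift.{u} (Fin 2),
      (![a, -pA] i.down) • (![x, y] i.down) = 0 := by
    have hse := Fintype.sum_equiv (Equiv.ulift : ULift.{u} (Fin 2) ≃ Fin 2)
      (fun i : ULift.{u} (Fin 2) => (![a, -pA] i.down) • (![x, y] i.down))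
      (fun i => (![a, -pA] i) • (![x, y] i)) (fun i => rfl)
    rw [hse, Fin.sum_univ_two]
    show (a : T) * x + ((-pA : ↥A) : T) * y = 0
    push_cast
    linear_combination hy
  obtain ⟨κ, c, z, hxz, hsum⟩ := Module.Flat.isTrivialRelation_of_sum_smul_eq_zero hrel
  have hx0 : x = ∑ j, c ⟨0⟩ j • z j := hxz ⟨0⟩
  have hc0 : ∀ j, c ⟨0⟩ j ∈ Ideal.span {pA} := by
    intro j
    have h := hsum j
    have hse := Fintype.sum_equiv (Equiv.ulift : ULift.{u} (Fin 2) ≃ Fin 2)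
      (fun i : ULift.{u} (Fin 2) => (![a, -pA] i.down) * c i j)
      (fun i => (![a, -pA] i) * c (Equiv.ulift.symm i) j) (fun i => rfl)
    rw [hse, Fin.sum_univ_two] at h
    have : a * c ⟨0⟩ j = pA * c ⟨1⟩ j := by
      have h2 : a * c ⟨0⟩ j + -pA * c ⟨1⟩ j = 0 := h
      linear_combination h2
    have hmem : a * c ⟨0⟩ j ∈ Ideal.span {pA} := by
      rw [this]; exact Ideal.mul_mem_right _ _ (Ideal.subset_span rfl)
    rcases hpAprime.mem_or_mem hmem with h' | h'
    · exact absurd h' ha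
    · exact h'
  rw [Ideal.mem_span_singleton]
  rw [hx0]
  apply Finset.dvd_sum
  intro j _
  obtain ⟨d, hd⟩ := Ideal.mem_span_singleton.mp (hc0 j)
  refine ⟨(d : T) * z j, ?_⟩
  show (c ⟨0⟩ j : T) * z j = _
  rw [hd]
  push_cast
  ring


/-- **Theorem 11, necessity (b).** If `Â = T` and `pA` is prime with semilocal formal
fiber having maximal ideals the elements of `C`, then every associated prime of `T/pT`
is contained in some `Qᵢ`. -/
theorem statement10
    {T : Type u} [CommRing T] [IsLocalRing T] [IsNoetherianRing T]
    [IsAdicComplete (IsLocalRing.maximalIdeal T) T]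
    {k : ℕ} (hk : 0 < k) (Q : Fin k → Ideal T)
    (hQprime : ∀ i, (Q i).IsPrime)
    (hQnonmax : ∀ i, Q i ≠ IsLocalRing.maximalIdeal T)
    (hQinc : ∀ i j, Q i ≤ Q j → Q i = Q j)
    (p : T) (hp0 : p ≠ 0) (hpQ : ∀ i, p ∈ Q i)
    (A : Subring T) (hpA : p ∈ A)
    (hANoeth : IsNoetherianRing ↥A) (hAdom : IsDomain ↥A)
    (hAql : QuasilocalWithMaxIdeal A)
    (φ : AdicCompletion ((IsLocalRing.maximalIdeal T).comap A.subtype) ↥A ≃+* T)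
    (hφ : ∀ a : ↥A,
      φ (algebraMap ↥A (AdicCompletion ((IsLocalRing.maximalIdeal T).comap A.subtype) ↥A) a)
        = (a : T))
    (hpAprime : (Ideal.span {(⟨p, hpA⟩ : ↥A)}).IsPrime)
    (hQA : ∀ i, (Q i).comap A.subtype = Ideal.span {(⟨p, hpA⟩ : ↥A)})
    (hfiber : ∀ Q' : Ideal T, Q'.IsPrime →
      Q'.comap A.subtype = Ideal.span {(⟨p, hpA⟩ : ↥A)} → ∃ i, Q' ≤ Q i)
    :
    (∀ P ∈ associatedPrimes T (T ⧸ Ideal.span {p}), ∃ i, P ≤ Q i) := by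
  
  haveI := hANoeth
  haveI hflatC : Module.Flat ↥A
      (AdicCompletion ((IsLocalRing.maximalIdeal T).comap A.subtype) ↥A) :=
    inferInstance
  let e : AdicCompletion ((IsLocalRing.maximalIdeal T).comap A.subtype) ↥A ≃ₗ[↥A] T :=
    { φ.toAddEquiv with
      map_smul' := fun a x => by
        show φ (a • x) = a • φ x
        rw [Algebra.smul_def, map_mul, hφ]
        rfl }
  haveI hflat : Module.Flat ↥A T :=
    Module.Flat.of_linearEquiv e.symm
  intro P hP
  obtain ⟨hPprime, m, hPm⟩ := isAssociatedPrime_iff.mp hP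
  obtain ⟨t, rfl⟩ := Submodule.Quotient.mk_surjective _ m
  have hmem : ∀ r : T, r ∈ P ↔ r * t ∈ Ideal.span {p} := by
    intro r
    rw [hPm, Submodule.mem_colon_singleton, Submodule.mem_bot]
    rw [← Submodule.Quotient.mk_smul, Submodule.Quotient.mk_eq_zero]
    rfl
  have htp : t ∉ Ideal.span {p} := by
    intro ht
    have : (1 : T) ∈ P := (hmem 1).mpr (by simpa using ht)
    exact hPprime.ne_top (Ideal.eq_top_of_isUnit_mem _ this isUnit_one)
  apply hfiber P hPprime
  apply le_antisymm
  · intro a ha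
    have haP : (a : T) ∈ P := ha
    by_contra hnot
    exact htp (flat_torsion A p hpA hpAprime a hnot t ((hmem a).mp haP))
  · rw [Ideal.span_le]
    intro x hx
    rw [Set.mem_singleton_iff] at hx
    subst hx
    show (p : T) ∈ P
    exact (hmem p).mpr (Ideal.mul_mem_right _ _ (Ideal.subset_span rfl))
end

section
/- Let Π denote the prime subring of T. Suppose A ⊆ T is a local (Noetherian quasilocal) domain with p ∈ A such that the inclusion A ⊆ T induces an isomorphism of the (A ∩ 𝔪)-adic completion of A with T, pA is a prime ideal of A, Qᵢ ∩ A = pA for every i, and every prime ideal Q of T with Q ∩ A = pA satisfies Q ⊆ Qᵢ for some i ∈ {1, …, k}. Then ((Qᵢ \ pT)Π[p]) ∩ Π[p] = {0} for all i ∈ {1, …, k}. -/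
universe u

lemma myFlat {T : Type u} [CommRing T] (A : Subring T) [IsNoetherianRing ↥A]
    (I : Ideal ↥A) (φ : AdicCompletion I ↥A ≃+* T)
    (hφ : ∀ a : ↥A, φ (algebraMap ↥A (AdicCompletion I ↥A) a) = (a : T)) :
    Module.Flat ↥A T := by
  have h1 : Module.Flat ↥A (AdicCompletion I ↥A) :=
    AdicCompletion.flat_of_isNoetherian (R := ↥A) (I := I)
  let e : AdicCompletion I ↥A ≃ₗ[↥A] T :=
    { φ.toAddEquiv with
      map_smul' := by
        intro a x
        show φ (a • x) = a • φ x
        rw [Algebra.smul_def, map_mul, hφ, Algebra.smul_def]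
        rfl }
  exact Module.Flat.of_linearEquiv e.symm

lemma myReg {T : Type u} [CommRing T] (A : Subring T) [IsDomain ↥A]
    (hflat : Module.Flat ↥A T) (pa : ↥A) (hpa : pa ≠ 0) (x : T)
    (h : (pa : T) * x = 0) : x = 0 := by
  have hrel : ∑ _i : PUnit.{u+1}, pa • x = 0 := by
    rw [Fintype.sum_unique]; exact h
  obtain ⟨κ, a, y, hx, ha⟩ :=
    Module.Flat.isTrivialRelation_of_sum_smul_eq_zero
      (f := fun _ : PUnit.{u+1} => pa) (x := fun _ => x) hrel
  have hx' : x = ∑ j, a PUnit.unit j • y j := hx PUnit.unit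
  have : ∀ j, a PUnit.unit j = 0 := by
    intro j
    have := ha j
    simp at this
    exact this.resolve_left hpa
  rw [hx']
  simp [this]

lemma myStep2 {T : Type u} [CommRing T] (A : Subring T)
    (hflat : Module.Flat ↥A T) (pa b : ↥A)
    (hprime : (Ideal.span {pa}).IsPrime) (hb : b ∉ Ideal.span {pa})
    (x y : T) (h : (b : T) * x = (pa : T) * y) :
    x ∈ Ideal.span {(pa : T)} := by
  classical
  set f : ULift.{u} (Fin 2) → ↥A := fun i => if i.down = 0 then b else -pa with hf
  set xs : ULift.{u} (Fin 2) → T := fun i => if i.down = 0 then x else y with hxs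
  have hrel : ∑ i, f i • xs i = 0 := by
    rw [← Equiv.ulift.symm.sum_comp (fun i => f i • xs i)]
    have : ∑ i : Fin 2, f (Equiv.ulift.symm i) • xs (Equiv.ulift.symm i)
        = (b : T) * x + (-(pa : T)) * y := by
      rw [Fin.sum_univ_two]
      simp only [hf, hxs, Equiv.ulift, Equiv.coe_fn_symm_mk, Algebra.smul_def]
      norm_num
      rfl
    rw [this, h]; ring
  obtain ⟨κ, a, ys, hx, ha⟩ :=
    Module.Flat.isTrivialRelation_of_sum_smul_eq_zero (f := f) (x := xs) hrel
  have hx0 : x = ∑ j, a ⟨0⟩ j • ys j := by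
    have := hx ⟨0⟩; simpa [hxs] using this
  have key : ∀ j, a ⟨0⟩ j ∈ Ideal.span {pa} := by
    intro j
    have h2 := ha j
    rw [← Equiv.ulift.symm.sum_comp (fun i => f i * a i j), Fin.sum_univ_two] at h2
    simp only [hf, Equiv.ulift, Equiv.coe_fn_symm_mk] at h2
    norm_num at h2
    have : b * a ⟨0⟩ j = pa * a ⟨1⟩ j := by
      have h3 : b * a ⟨0⟩ j + -pa * a ⟨1⟩ j = 0 := by simpa using h2
      linear_combination h3
    have hmem : b * a ⟨0⟩ j ∈ Ideal.span {pa} := by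
      rw [this]; exact Ideal.mem_span_singleton.mpr ⟨a ⟨1⟩ j, rfl⟩
    rcases hprime.mem_or_mem hmem with h' | h'
    · exact absurd h' hb
    · exact h'
  rw [hx0]
  refine Ideal.sum_mem _ fun j _ => ?_
  obtain ⟨c, hc⟩ := Ideal.mem_span_singleton.mp (key j)
  rw [Algebra.smul_def, hc]
  refine Ideal.mem_span_singleton.mpr ⟨(c : T) * ys j, ?_⟩
  show ((pa * c : ↥A) : T) * ys j = (pa : T) * ((c : T) * ys j)
  push_cast
  ring

lemma myKrull {A : Type*} [CommRing A] [IsDomain A] [IsNoetherianRing A] (pa : A)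
    (hprime : (Ideal.span {pa}).IsPrime) (t : A) (ht : t ≠ 0) :
    ∃ (n : ℕ) (a : A), t = pa ^ n * a ∧ a ∉ Ideal.span {pa} := by
  have hbot : (⨅ n : ℕ, Ideal.span {pa} ^ n) = ⊥ :=
    Ideal.iInf_pow_eq_bot_of_isDomain (Ideal.span {pa}) hprime.ne_top
  have hex : ∃ n, t ∉ Ideal.span {pa} ^ n := by
    by_contra hcon
    push_neg at hcon
    have : t ∈ (⨅ n : ℕ, Ideal.span {pa} ^ n) := (Submodule.mem_iInf _).mpr hcon
    rw [hbot] at this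
    exact ht this
  classical
  have hN : t ∉ Ideal.span {pa} ^ (Nat.find hex) := Nat.find_spec hex
  have hN0 : Nat.find hex ≠ 0 := by
    intro h
    rw [h, pow_zero, Ideal.one_eq_top] at hN
    exact hN trivial
  obtain ⟨m, hm⟩ : ∃ m, Nat.find hex = m + 1 :=
    ⟨Nat.find hex - 1, (Nat.succ_pred_eq_of_ne_zero hN0).symm⟩
  have hmem : t ∈ Ideal.span {pa} ^ m := by
    by_contra hc
    exact absurd (Nat.find_min' hex hc) (by omega)
  rw [Ideal.span_singleton_pow, Ideal.mem_span_singleton] at hmem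
  obtain ⟨a, rfl⟩ := hmem
  refine ⟨m, a, rfl, fun hamem => ?_⟩
  obtain ⟨c, rfl⟩ := Ideal.mem_span_singleton.mp hamem
  apply hN
  rw [hm, Ideal.span_singleton_pow, Ideal.mem_span_singleton]
  exact ⟨c, by ring⟩

lemma myRegPow {T : Type u} [CommRing T] (A : Subring T) [IsDomain ↥A]
    (hflat : Module.Flat ↥A T) (pa : ↥A) (hpa : pa ≠ 0) (n : ℕ) (x : T)
    (h : ((pa : T)) ^ n * x = 0) : x = 0 := by
  induction n with
  | zero => simpa using h
  | succ m ih =>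
    apply ih
    apply myReg A hflat pa hpa
    rw [← h]; ring

/-- **Theorem 11, necessity (c).** If `Â = T` and `pA` is prime with semilocal formal
fiber having maximal ideals the elements of `C`, then
`((Qᵢ \ pT)Π[p]) ∩ Π[p] = {0}` for all `i`. -/
theorem statement11
    {T : Type u} [CommRing T] [IsLocalRing T] [IsNoetherianRing T]
    [IsAdicComplete (IsLocalRing.maximalIdeal T) T]
    {k : ℕ} (hk : 0 < k) (Q : Fin k → Ideal T)
    (hQprime : ∀ i, (Q i).IsPrime)
    (hQnonmax : ∀ i, Q i ≠ IsLocalRing.maximalIdeal T)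
    (hQinc : ∀ i j, Q i ≤ Q j → Q i = Q j)
    (p : T) (hp0 : p ≠ 0) (hpQ : ∀ i, p ∈ Q i)
    (A : Subring T) (hpA : p ∈ A)
    (hANoeth : IsNoetherianRing ↥A) (hAdom : IsDomain ↥A)
    (hAql : QuasilocalWithMaxIdeal A)
    (φ : AdicCompletion ((IsLocalRing.maximalIdeal T).comap A.subtype) ↥A ≃+* T)
    (hφ : ∀ a : ↥A,
      φ (algebraMap ↥A (AdicCompletion ((IsLocalRing.maximalIdeal T).comap A.subtype) ↥A) a)
        = (a : T))
    (hpAprime : (Ideal.span {(⟨p, hpA⟩ : ↥A)}).IsPrime)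
    (hQA : ∀ i, (Q i).comap A.subtype = Ideal.span {(⟨p, hpA⟩ : ↥A)})
    (hfiber : ∀ Q' : Ideal T, Q'.IsPrime →
      Q'.comap A.subtype = Ideal.span {(⟨p, hpA⟩ : ↥A)} → ∃ i, Q' ≤ Q i)
    :
    (∀ i : Fin k, ∀ t ∈ CompAvoid (Q i) p ((Subring.closure {p} : Subring T) : Set T),
      t ∈ Subring.closure ({p} : Set T) → t = 0) := by
  have hflat : Module.Flat ↥A T := myFlat A _ φ hφ
  set pa : ↥A := (⟨p, hpA⟩ : ↥A) with hpa_def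
  have hpane : pa ≠ 0 := fun h => hp0 (congrArg Subtype.val h)
  intro i t ht htin
  by_contra htne
  obtain ⟨q, hqQ, hqp, r, hr, rfl⟩ := ht
  have hsub : (Subring.closure ({p} : Set T)) ≤ A :=
    Subring.closure_le.mpr (by simpa using hpA)
  have hrA : r ∈ A := hsub hr
  have htA : q * r ∈ A := hsub htin
  have hrne : r ≠ 0 := fun h => htne (by rw [h, mul_zero])
  obtain ⟨n, a, hna, hana⟩ := myKrull pa hpAprime (⟨q * r, htA⟩ : ↥A)
    (fun h => htne (congrArg Subtype.val h))
  obtain ⟨m, b, hmb, hbnb⟩ := myKrull pa hpAprime (⟨r, hrA⟩ : ↥A)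
    (fun h => hrne (congrArg Subtype.val h))
  -- push equalities to T
  have hT1 : q * r = p ^ n * (a : T) := by
    have := congrArg Subtype.val hna
    push_cast at this
    simpa using this
  have hT2 : r = p ^ m * (b : T) := by
    have := congrArg Subtype.val hmb
    push_cast at this
    simpa using this
  by_cases hmn : n ≤ m
  · -- q * p^(m-n) * b = a, so a ∈ Q i ∩ A = pA, contradiction
    have hpow : (p : T) ^ m = p ^ n * p ^ (m - n) := by
      rw [← pow_add, Nat.add_sub_cancel' hmn]
    have hcalc : p ^ n * (q * (p ^ (m - n) * (b : T))) = p ^ n * (a : T) := by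
      calc p ^ n * (q * (p ^ (m - n) * (b : T)))
          = q * ((p ^ n * p ^ (m - n)) * (b : T)) := by ring
        _ = q * (p ^ m * (b : T)) := by rw [← hpow]
        _ = q * r := by rw [← hT2]
        _ = p ^ n * (a : T) := hT1
    have heq : q * (p ^ (m - n) * (b : T)) = (a : T) := by
      have h0 : (p : T) ^ n * (q * (p ^ (m - n) * (b : T)) - (a : T)) = 0 := by
        rw [mul_sub, hcalc]; ring
      exact sub_eq_zero.mp (myRegPow A hflat pa hpane n _ h0)
    have haQ : (a : T) ∈ Q i := by
      rw [← heq]; exact Ideal.mul_mem_right _ _ hqQ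
    have : a ∈ (Q i).comap A.subtype := haQ
    rw [hQA i] at this
    exact hana this
  · -- m < n : q * b = p^(n-m) * a ∈ pT ⇒ q ∈ pT, contradiction
    push_neg at hmn
    have hpow : (p : T) ^ n = p ^ m * p ^ (n - m) := by
      rw [← pow_add, Nat.add_sub_cancel' (le_of_lt hmn)]
    have hcalc : p ^ m * (q * (b : T)) = p ^ m * (p ^ (n - m) * (a : T)) := by
      calc p ^ m * (q * (b : T)) = q * (p ^ m * (b : T)) := by ring
        _ = q * r := by rw [← hT2]
        _ = p ^ n * (a : T) := hT1
        _ = p ^ m * (p ^ (n - m) * (a : T)) := by rw [hpow]; ring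
    have heq : q * (b : T) = p ^ (n - m) * (a : T) := by
      have h0 : (p : T) ^ m * (q * (b : T) - p ^ (n - m) * (a : T)) = 0 := by
        rw [mul_sub, hcalc]; ring
      exact sub_eq_zero.mp (myRegPow A hflat pa hpane m _ h0)
    have hqmem : q ∈ Ideal.span {(pa : T)} := by
      apply myStep2 A hflat pa b hpAprime hbnb q (p ^ (n - m - 1) * (a : T))
      have hnm : n - m = (n - m - 1) + 1 := by omega
      calc (b : T) * q = q * (b : T) := by ring
        _ = p ^ (n - m) * (a : T) := heq
        _ = (pa : T) * (p ^ (n - m - 1) * (a : T)) := by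
            show p ^ (n - m) * (a : T) = p * (p ^ (n - m - 1) * (a : T))
            conv_lhs => rw [hnm]
            rw [pow_succ]; ring
    exact hqp hqmem
end

section
/- Suppose A ⊆ T is such that the inclusion A ⊆ T induces an isomorphism of the (A ∩ 𝔪)-adic completion of A with T, A is a domain, pA is a prime ideal of A, Qᵢ ∩ A = pA for every i, and every prime ideal Q of T with Q ∩ A = pA satisfies Q ⊆ Qᵢ for some i. Then for every associated prime P of the T-module T/pT, P ∩ A = pA; in particular, every such P lies in the formal fiber of pA, i.e., P ⊆ Qᵢ for some i ∈ {1, …, k}. -/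
universe u

open scoped TensorProduct

set_option synthInstance.maxHeartbeats 1000000
set_option maxHeartbeats 1000000

/-- **Necessity, associated primes of `T/pT`.** If `Â = T`, `A` is a domain, `pA` is
prime with semilocal formal fiber having maximal ideals the elements of `C`, then every
associated prime `P` of `T/pT` satisfies `P ∩ A = pA`; in particular `P` lies in the
formal fiber of `pA`, i.e. `P ⊆ Qᵢ` for some `i`. -/
theorem statement12
    {T : Type u} [CommRing T] [IsLocalRing T] [IsNoetherianRing T]
    [IsAdicComplete (IsLocalRing.maximalIdeal T) T]
    {k : ℕ} (hk : 0 < k) (Q : Fin k → Ideal T)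
    (hQprime : ∀ i, (Q i).IsPrime)
    (hQnonmax : ∀ i, Q i ≠ IsLocalRing.maximalIdeal T)
    (hQinc : ∀ i j, Q i ≤ Q j → Q i = Q j)
    (p : T) (hp0 : p ≠ 0) (hpQ : ∀ i, p ∈ Q i)
    (A : Subring T) (hpA : p ∈ A)
    (hANoeth : IsNoetherianRing ↥A) (hAdom : IsDomain ↥A)
    (hAql : QuasilocalWithMaxIdeal A)
    (φ : AdicCompletion ((IsLocalRing.maximalIdeal T).comap A.subtype) ↥A ≃+* T)
    (hφ : ∀ a : ↥A,
      φ (algebraMap ↥A (AdicCompletion ((IsLocalRing.maximalIdeal T).comap A.subtype) ↥A) a)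
        = (a : T))
    (hpAprime : (Ideal.span {(⟨p, hpA⟩ : ↥A)}).IsPrime)
    (hQA : ∀ i, (Q i).comap A.subtype = Ideal.span {(⟨p, hpA⟩ : ↥A)})
    (hfiber : ∀ Q' : Ideal T, Q'.IsPrime →
      Q'.comap A.subtype = Ideal.span {(⟨p, hpA⟩ : ↥A)} → ∃ i, Q' ≤ Q i)
    :
    (∀ P ∈ associatedPrimes T (T ⧸ Ideal.span {p}),
      P.comap A.subtype = Ideal.span {(⟨p, hpA⟩ : ↥A)} ∧ ∃ i, P ≤ Q i) := by
  classical
  haveI := hANoeth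
  -- T is a flat A-module, being isomorphic to the adic completion of the Noetherian ring A
  haveI hflat : Module.Flat ↥A T := by
    haveI : Module.Flat ↥A
        (AdicCompletion ((IsLocalRing.maximalIdeal T).comap A.subtype) ↥A) :=
      AdicCompletion.flat_of_isNoetherian _
    haveI : Module.Flat ↥A
        (AdicCompletion ((IsLocalRing.maximalIdeal T).comap A.subtype) ↥A) := this
    refine Module.Flat.of_linearEquiv
      (M := AdicCompletion ((IsLocalRing.maximalIdeal T).comap A.subtype) ↥A) ?_
    exact (AlgEquiv.ofRingEquiv (f := φ.symm)
      (fun a => by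
        apply φ.injective
        rw [φ.apply_symm_apply]
        exact (hφ a).symm)).toLinearEquiv
  set pA : Ideal ↥A := Ideal.span {(⟨p, hpA⟩ : ↥A)} with hpAdef
  -- the extension of pA to T, as an A-submodule, is pT
  have hNeq : (Ideal.span {p}).restrictScalars ↥A = pA • (⊤ : Submodule ↥A T) := by
    rw [Ideal.smul_top_eq_map, hpAdef, Ideal.map_span]
    congr 1
    congr 1
    rw [Set.image_singleton]
    congr 1
  -- key: multiplication by a ∈ A \ pA is injective on T/pT, by flatness
  have key : ∀ a : ↥A, a ∉ pA → ∀ t : T, (a : T) * t ∈ Ideal.span {p} →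
      t ∈ Ideal.span {p} := by
    intro a ha t ht
    have hm : Function.Injective
        ⇑(DistribMulAction.toLinearMap ↥A (↥A ⧸ pA) a) := by
      rw [← LinearMap.ker_eq_bot, eq_bot_iff]
      intro x hx
      obtain ⟨b, rfl⟩ := Submodule.Quotient.mk_surjective _ x
      have hx0 : a • (Submodule.Quotient.mk b : ↥A ⧸ pA) = 0 := hx
      rw [← Submodule.Quotient.mk_smul, Submodule.Quotient.mk_eq_zero] at hx0
      have hb : b ∈ pA := (hpAprime.mem_or_mem (by simpa [smul_eq_mul] using hx0)).resolve_left ha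
      simp only [Submodule.mem_bot]
      exact (Submodule.Quotient.mk_eq_zero _).mpr hb
    have hinj2 : Function.Injective
        ((DistribMulAction.toLinearMap ↥A (↥A ⧸ pA) a).rTensor T) :=
      Module.Flat.rTensor_preserves_injective_linearMap _ hm
    have hsm : Function.Injective (fun z : (↥A ⧸ pA) ⊗[↥A] T => a • z) := by
      erw [LinearMap.rTensor_smul_action] at hinj2
      exact hinj2
    set e := TensorProduct.quotTensorEquivQuotSMul T pA with he
    have hq : ∀ y : T ⧸ (pA • (⊤ : Submodule ↥A T)), a • y = 0 → y = 0 := by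
      intro y hy
      obtain ⟨z, rfl⟩ := e.surjective y
      have hz : a • z = 0 := by
        apply e.injective
        rw [map_smul, map_zero]; exact hy
      have : a • z = a • (0 : (↥A ⧸ pA) ⊗[↥A] T) := by rw [smul_zero]; exact hz
      rw [hsm this, map_zero]
    have ht' : t ∈ pA • (⊤ : Submodule ↥A T) := by
      have h1 : a • (Submodule.Quotient.mk t : T ⧸ (pA • (⊤ : Submodule ↥A T))) = 0 := by
        rw [← Submodule.Quotient.mk_smul, Submodule.Quotient.mk_eq_zero, ← hNeq]
        rw [Submodule.restrictScalars_mem]; exact ht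
      have := hq _ h1
      rwa [Submodule.Quotient.mk_eq_zero] at this
    rw [← hNeq] at ht'
    exact ht'
  intro P hP
  obtain ⟨hPprime, x, hxann⟩ := isAssociatedPrime_iff.mp hP
  have hx0 : x ≠ 0 := by
    intro h
    rw [h] at hxann
    apply hPprime.ne_top
    rw [hxann]
    simp [Submodule.annihilator_bot]
  have hpP : p ∈ P := by
    rw [hxann, Submodule.mem_colon_singleton, Submodule.mem_bot]
    obtain ⟨t, rfl⟩ := Submodule.Quotient.mk_surjective _ x
    rw [← Submodule.Quotient.mk_smul, Submodule.Quotient.mk_eq_zero]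
    rw [smul_eq_mul]
    exact Ideal.mul_mem_right t _ (Ideal.mem_span_singleton_self p)
  have hcomap : P.comap A.subtype = pA := by
    apply le_antisymm
    · intro a ha
      by_contra hnot
      have haP : (a : T) ∈ P := ha
      rw [hxann, Submodule.mem_colon_singleton, Submodule.mem_bot] at haP
      obtain ⟨t, rfl⟩ := Submodule.Quotient.mk_surjective _ x
      rw [← Submodule.Quotient.mk_smul, Submodule.Quotient.mk_eq_zero] at haP
      have := key a hnot t (by simpa [smul_eq_mul] using haP)
      exact hx0 (by rwa [Submodule.Quotient.mk_eq_zero])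
    · rw [hpAdef, Ideal.span_singleton_le_iff_mem]
      exact hpP
  exact ⟨hcomap, hfiber P hPprime hcomap⟩
end
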